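/- arXiv:0905.0215 — 5 statements merged into one kernel-verified Lean document; each statement's English description precedes it below -/
import Mathlib

section
/- The alternating series of central binomial coefficients ∑_{n=1}^∞ (-1)^{n+1} · C(2n, n) / (n · 4^n) converges and equals 2 · log((√2 + 1)/2). -/
open Real Filter Set Topology

open Real Filter Set Topology

noncomputable def cb (n : ℕ) : ℝ := (Nat.centralBinom n : ℝ) / 4 ^ n

lemma cb_pos (n : ℕ) : 0 < cb n :=
  div_pos (by exact_mod_cast Nat.centralBinom_pos n) (by positivity)

lemma cb_zero : cb 0 = 1 := by simp [cb, Nat.centralBinom]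

lemma cb_one : cb 1 = 1 / 2 := by
  norm_num [cb, Nat.centralBinom, Nat.choose]

lemma cb_rec (n : ℕ) : cb (n + 1) * (2 * n + 2) = cb n * (2 * n + 1) := by
  have h := Nat.succ_mul_centralBinom_succ n
  have h' : ((n : ℝ) + 1) * (Nat.centralBinom (n + 1) : ℝ)
      = 2 * (2 * n + 1) * (Nat.centralBinom n : ℝ) := by exact_mod_cast h
  have h4 : (4 : ℝ) ^ (n + 1) = 4 ^ n * 4 := by ring
  unfold cb
  rw [h4]
  field_simp
  nlinarith [h', pow_pos (show (0:ℝ) < 4 by norm_num) n]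

lemma cb_le_one (n : ℕ) : cb n ≤ 1 := by
  induction n with
  | zero => simp [cb_zero]
  | succ n ih =>
    have h := cb_rec n
    nlinarith [cb_pos n, cb_pos (n + 1)]

lemma cb_sq (n : ℕ) : cb n ^ 2 * (2 * n + 1) ≤ 1 := by
  induction n with
  | zero => simp [cb_zero]
  | succ n ih =>
    have h := cb_rec n
    have h1 : cb (n+1) ^ 2 * (2*n+2)^2 = cb n ^ 2 * (2*n+1)^2 := by
      linear_combination (cb (n+1) * (2*(n:ℝ)+2) + cb n * (2*(n:ℝ)+1)) * h
    rw [show ((2:ℝ) * ((n:ℕ)+1 : ℕ) + 1) = 2*(n:ℝ)+3 by push_cast; ring]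
    have h2 : (0:ℝ) < (2*(n:ℝ)+2)^2 := by positivity
    nlinarith [cb_pos n, cb_pos (n+1), sq_nonneg (cb n), mul_pos (cb_pos (n+1)) (cb_pos (n+1))]

section Sums
variable {x : ℝ} (hx : |x| < 1)

lemma norm_cb_pow (c : ℝ) (hc0 : 0 ≤ c) (hc : c ≤ 1) (n : ℕ) (s : ℝ) (hs : |s| = 1) :
    ‖s * c * x ^ n‖ ≤ |x| ^ n := by
  rw [norm_mul, norm_mul, Real.norm_eq_abs, Real.norm_eq_abs, Real.norm_eq_abs, hs,
    abs_of_nonneg hc0, abs_pow, one_mul]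
  exact mul_le_of_le_one_left (by positivity) hc

include hx

lemma sum_geo : Summable fun n : ℕ => |x| ^ n :=
  summable_geometric_of_lt_one (abs_nonneg x) hx

lemma sum_H : Summable fun n : ℕ => (-1) ^ n * cb n * x ^ n :=
  (sum_geo hx).of_norm_bounded fun n =>
    norm_cb_pow (cb n) (cb_pos n).le (cb_le_one n) n _ (by simp)

lemma sum_E : Summable fun n : ℕ => (-1) ^ n * cb (n + 1) * x ^ n :=
  (sum_geo hx).of_norm_bounded fun n =>
    norm_cb_pow (cb (n+1)) (cb_pos _).le (cb_le_one _) n _ (by simp)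

lemma sum_D : Summable fun n : ℕ => (-1) ^ n * cb n * ((n : ℝ) * x ^ (n - 1)) := by
  have h1 : Summable fun n : ℕ => ((n : ℝ) + 1) * |x| ^ n := by
    have hgeo : Summable fun n : ℕ => (n : ℝ) * |x| ^ n := by
      simpa using summable_pow_mul_geometric_of_norm_lt_one 1
        (r := |x|) (by rwa [Real.norm_eq_abs, abs_abs])
    simpa [add_mul] using hgeo.add (sum_geo hx)
  have h2 : Summable fun n : ℕ => ((n : ℝ) + 1) * |x| ^ ((n + 1) - 1) := by simpa using h1
  have h3 : Summable fun n : ℕ => ((n : ℕ) : ℝ) * |x| ^ (n - 1) := by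
    rw [← summable_nat_add_iff 1]
    convert h2 using 2 with n
    · rfl
    push_cast; ring_nf
  refine h3.of_norm_bounded fun n => ?_
  rw [norm_mul, norm_mul, norm_mul, Real.norm_eq_abs, Real.norm_eq_abs, Real.norm_eq_abs,
    Real.norm_eq_abs, abs_pow, abs_pow, abs_neg, abs_one, one_pow, one_mul, Nat.abs_cast]
  have : |cb n| ≤ 1 := by rw [abs_of_nonneg (cb_pos n).le]; exact cb_le_one n
  nlinarith [abs_nonneg (cb n), pow_nonneg (abs_nonneg x) (n-1), Nat.cast_nonneg (α := ℝ) n,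
    mul_nonneg (Nat.cast_nonneg (α := ℝ) n) (pow_nonneg (abs_nonneg x) (n-1))]

lemma sum_F : Summable fun n : ℕ => (-1) ^ n * cb (n + 1) / ((n : ℝ) + 1) * x ^ (n + 1) := by
  refine ((sum_geo hx).mul_left |x|).of_norm_bounded fun n => ?_
  rw [norm_mul, Real.norm_eq_abs, Real.norm_eq_abs, abs_pow, pow_succ, mul_comm (|x|^n)]
  refine mul_le_of_le_one_left (by positivity) ?_
  rw [abs_div, abs_mul]
  have hn : (0:ℝ) < (n:ℝ) + 1 := by positivity
  rw [abs_of_pos hn, div_le_one hn]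
  have : |(-1:ℝ)^n| * |cb (n+1)| ≤ 1 := by
    simp [abs_of_nonneg (cb_pos (n+1)).le, cb_le_one]
  linarith [Nat.cast_nonneg (α := ℝ) n]

end Sums

noncomputable def Hf (x : ℝ) : ℝ := ∑' n : ℕ, (-1) ^ n * cb n * x ^ n
noncomputable def Df (x : ℝ) : ℝ := ∑' n : ℕ, (-1) ^ n * cb n * ((n : ℝ) * x ^ (n - 1))
noncomputable def Ff (x : ℝ) : ℝ := ∑' n : ℕ, (-1) ^ n * cb (n + 1) / ((n : ℝ) + 1) * x ^ (n + 1)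
noncomputable def Ef (x : ℝ) : ℝ := ∑' n : ℕ, (-1) ^ n * cb (n + 1) * x ^ n

lemma sum_pow_sub_one {r : ℝ} (hr : |r| < 1) :
    Summable fun n : ℕ => (n : ℝ) * |r| ^ (n - 1) := by
  have h1 : Summable fun n : ℕ => ((n : ℝ) + 1) * |r| ^ n := by
    have hgeo : Summable fun n : ℕ => (n : ℝ) * |r| ^ n := by
      simpa using summable_pow_mul_geometric_of_norm_lt_one 1
        (r := |r|) (by rwa [Real.norm_eq_abs, abs_abs])
    simpa [add_mul] using hgeo.add (summable_geometric_of_lt_one (abs_nonneg r) hr)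
  rw [← summable_nat_add_iff 1]
  convert h1 using 2 with n
  · rfl
  push_cast; ring_nf

lemma mem_ball_abs {x : ℝ} (hx : |x| < 1) :
    x ∈ Ioo (-((|x| + 1) / 2)) ((|x| + 1) / 2) := by
  constructor <;> cases abs_cases x <;> linarith [abs_nonneg x]

lemma hasDerivAt_Hf {x : ℝ} (hx : |x| < 1) : HasDerivAt Hf (Df x) x := by
  set r : ℝ := (|x| + 1) / 2 with hr
  have hr1 : r < 1 := by simp only [hr]; linarith
  have hr0 : 0 < r := by positivity
  have hrabs : |r| < 1 := by rw [abs_of_pos hr0]; exact hr1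
  refine hasDerivAt_tsum_of_isPreconnected
    (u := fun n : ℕ => (n : ℝ) * r ^ (n - 1))
    (g' := fun n y => (-1) ^ n * cb n * ((n : ℝ) * y ^ (n - 1)))
    ?_ isOpen_Ioo (convex_Ioo _ _).isPreconnected
    (fun n y _ => ((hasDerivAt_pow n y).const_mul ((-1) ^ n * cb n)))
    (fun n y hy => ?_) (by constructor <;> simp [hr0] : (0:ℝ) ∈ Ioo (-r) r)
    ?_ (mem_ball_abs hx)
  · simpa [abs_of_pos hr0] using sum_pow_sub_one (r := r) (by rwa [abs_of_pos hr0])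
  · have hyr : |y| ≤ r := by
      rw [abs_le]; exact ⟨hy.1.le, hy.2.le⟩
    rw [norm_mul, norm_mul, norm_mul, Real.norm_eq_abs, Real.norm_eq_abs, Real.norm_eq_abs,
      Real.norm_eq_abs, Nat.abs_cast, abs_pow, abs_pow, abs_neg, abs_one, one_pow, one_mul,
      abs_of_nonneg (cb_pos n).le]
    have h1 : |y| ^ (n-1) ≤ r ^ (n-1) := pow_le_pow_left₀ (abs_nonneg y) hyr _
    have h2 : cb n * ((n:ℝ) * |y| ^ (n-1)) ≤ 1 * ((n:ℝ) * r ^ (n-1)) := by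
      have := cb_le_one n
      have hn0 : (0:ℝ) ≤ (n:ℝ) := Nat.cast_nonneg n
      nlinarith [cb_pos n, pow_nonneg (abs_nonneg y) (n-1), mul_nonneg hn0 (pow_nonneg (abs_nonneg y) (n-1))]
    simpa using h2
  · refine summable_of_ne_finset_zero (s := {0}) fun n hn => ?_
    have : n ≠ 0 := by simpa using hn
    simp [zero_pow this]

lemma hasDerivAt_Ff {x : ℝ} (hx : |x| < 1) : HasDerivAt Ff (Ef x) x := by
  set r : ℝ := (|x| + 1) / 2 with hr
  have hr1 : r < 1 := by simp only [hr]; linarith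
  have hr0 : 0 < r := by positivity
  have key : HasDerivAt Ff
      (∑' n : ℕ, (-1) ^ n * cb (n + 1) / ((n : ℝ) + 1) * (((n : ℝ) + 1) * x ^ n)) x := by
    refine hasDerivAt_tsum_of_isPreconnected
      (u := fun n : ℕ => r ^ n)
      (g' := fun n y => (-1) ^ n * cb (n + 1) / ((n : ℝ) + 1) * (((n : ℝ) + 1) * y ^ n))
      (summable_geometric_of_lt_one hr0.le hr1) isOpen_Ioo (convex_Ioo _ _).isPreconnected
      (fun n y _ => ?_) (fun n y hy => ?_)
      (by constructor <;> simp [hr0] : (0:ℝ) ∈ Ioo (-r) r) ?_ (mem_ball_abs hx)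
    · have := (hasDerivAt_pow (n + 1) y).const_mul ((-1) ^ n * cb (n + 1) / ((n : ℝ) + 1))
      simpa using this
    · have hyr : |y| ≤ r := by rw [abs_le]; exact ⟨hy.1.le, hy.2.le⟩
      have hn1 : ((n : ℝ) + 1) ≠ 0 := by positivity
      have heq : (-1:ℝ) ^ n * cb (n + 1) / ((n : ℝ) + 1) * (((n : ℝ) + 1) * y ^ n)
          = (-1) ^ n * cb (n + 1) * y ^ n := by field_simp
      rw [heq, norm_mul, norm_mul, Real.norm_eq_abs, Real.norm_eq_abs, Real.norm_eq_abs,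
        abs_pow, abs_pow, abs_neg, abs_one, one_pow, one_mul, abs_of_nonneg (cb_pos _).le]
      have h1 : |y| ^ n ≤ r ^ n := pow_le_pow_left₀ (abs_nonneg y) hyr _
      nlinarith [cb_pos (n+1), cb_le_one (n+1), pow_nonneg (abs_nonneg y) n]
    · refine summable_of_ne_finset_zero (s := {0}) fun n hn => ?_
      simp [zero_pow (by omega : n + 1 ≠ 0)]
  have : (∑' n : ℕ, (-1) ^ n * cb (n + 1) / ((n : ℝ) + 1) * (((n : ℝ) + 1) * x ^ n)) = Ef x := by
    refine tsum_congr fun n => ?_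
    have hn1 : ((n : ℝ) + 1) ≠ 0 := by positivity
    field_simp [Ef]
  rwa [this] at key

lemma hasDerivAt_sqrt1p {x : ℝ} (hx : -1 < x) :
    HasDerivAt (fun y : ℝ => Real.sqrt (1 + y)) (1 / (2 * Real.sqrt (1 + x))) x := by
  have h1 : (0:ℝ) < 1 + x := by linarith
  have := (Real.hasDerivAt_sqrt h1.ne').comp x ((hasDerivAt_id x).const_add 1)
  exact this.congr_deriv (by ring)

lemma sum_nxn {x : ℝ} (hx : |x| < 1) :
    Summable fun n : ℕ => (n : ℝ) * ((-1) ^ n * cb n) * x ^ n := by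
  have := (sum_D hx).mul_left x
  refine this.congr fun n => ?_
  match n with
  | 0 => simp
  | (m+1) => simp only [Nat.add_sub_cancel]; push_cast; ring

lemma xDf {x : ℝ} (hx : |x| < 1) :
    x * Df x = ∑' n : ℕ, (n : ℝ) * ((-1) ^ n * cb n) * x ^ n := by
  unfold Df
  rw [← tsum_mul_left]
  refine tsum_congr fun n => ?_
  match n with
  | 0 => simp
  | (m+1) => simp only [Nat.add_sub_cancel]; push_cast; ring

lemma ode {x : ℝ} (hx : |x| < 1) : 2 * (1 + x) * Df x + Hf x = 0 := by
  have hshift : Df x = ∑' n : ℕ, ((n : ℝ) + 1) * ((-1) ^ (n + 1) * cb (n + 1)) * x ^ n := by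
    unfold Df
    rw [Summable.tsum_eq_zero_add (sum_D hx)]
    simp only [Nat.cast_zero, Nat.add_sub_cancel, pow_zero, one_mul, zero_mul, mul_zero, zero_add]
    refine tsum_congr fun n => ?_
    push_cast; ring
  have h2D : 2 * Df x = ∑' n : ℕ, -(((2 * (n : ℝ) + 1) * ((-1) ^ n * cb n)) * x ^ n) := by
    rw [hshift, ← tsum_mul_left]
    refine tsum_congr fun n => ?_
    have h := cb_rec n
    have : ((n : ℝ) + 1) * ((-1) ^ (n+1) * cb (n+1)) = -((2 * (n:ℝ) + 1) * ((-1)^n * cb n)) / 2 := by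
      rw [pow_succ]
      linear_combination (-(-1:ℝ)^n/2) * h
    rw [this]; ring
  have hsplit : (∑' n : ℕ, ((2 * (n : ℝ) + 1) * ((-1) ^ n * cb n)) * x ^ n)
      = 2 * (x * Df x) + Hf x := by
    rw [xDf hx, ← tsum_mul_left]
    unfold Hf
    rw [← Summable.tsum_add ((sum_nxn hx).mul_left 2) (sum_H hx)]
    refine tsum_congr fun n => ?_
    ring
  rw [tsum_neg] at h2D
  rw [hsplit] at h2D
  nlinarith [h2D]

noncomputable def Gf (x : ℝ) : ℝ := 2 * Real.log ((1 + Real.sqrt (1 + x)) / 2)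

lemma abs_lt_of_mem {x : ℝ} (hx : x ∈ Ioo (-1 : ℝ) 1) : |x| < 1 := abs_lt.mpr ⟨hx.1, hx.2⟩

lemma hasDerivAt_K {x : ℝ} (hx : x ∈ Ioo (-1 : ℝ) 1) :
    HasDerivAt (fun y => Hf y * Real.sqrt (1 + y)) 0 x := by
  have h1 : (0:ℝ) < 1 + x := by linarith [hx.1]
  have hs : 0 < Real.sqrt (1 + x) := Real.sqrt_pos.mpr h1
  have hsq : Real.sqrt (1 + x) ^ 2 = 1 + x := Real.sq_sqrt h1.le
  have hD := (hasDerivAt_Hf (abs_lt_of_mem hx)).mul (hasDerivAt_sqrt1p hx.1)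
  refine hD.congr_deriv (Eq.symm ?_)
  have hode := ode (abs_lt_of_mem hx)
  field_simp
  linear_combination (-1 : ℝ) * hode - 2 * Df x * hsq

/-- constancy of a function with zero derivative on Ioo -/
lemma const_on_Ioo {f : ℝ → ℝ} {a b : ℝ}
    (hf : ∀ x ∈ Ioo a b, HasDerivAt f 0 x) {x y : ℝ}
    (hx : x ∈ Ioo a b) (hy : y ∈ Ioo a b) : f x = f y := by
  refine (convex_Ioo a b).is_const_of_fderivWithin_eq_zero (𝕜 := ℝ)
    (fun z hz => (hf z hz).differentiableAt.differentiableWithinAt) (fun z hz => ?_) hx hy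
  rw [fderivWithin_of_isOpen isOpen_Ioo hz]
  have := (hf z hz).hasFDerivAt.fderiv
  rw [this]
  ext w
  simp

lemma Hf_zero : Hf 0 = 1 := by
  unfold Hf
  rw [tsum_eq_single 0 (fun n hn => by simp [zero_pow hn])]
  simp [cb_zero]

lemma Hf_sqrt {x : ℝ} (hx : x ∈ Ioo (-1 : ℝ) 1) : Hf x * Real.sqrt (1 + x) = 1 := by
  have h0 : (0:ℝ) ∈ Ioo (-1:ℝ) 1 := by norm_num
  have := const_on_Ioo (fun z hz => hasDerivAt_K hz) hx h0
  simpa [Hf_zero] using this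

lemma xEf {x : ℝ} (hx : |x| < 1) : x * Ef x = 1 - Hf x := by
  have hH : Hf x = 1 + ∑' n : ℕ, (-1) ^ (n + 1) * cb (n + 1) * x ^ (n + 1) := by
    unfold Hf
    rw [Summable.tsum_eq_zero_add (sum_H hx)]
    simp [cb_zero]
  have hx2 : x * Ef x = ∑' n : ℕ, (-1) ^ n * cb (n + 1) * x ^ (n + 1) := by
    unfold Ef
    rw [← tsum_mul_left]
    exact tsum_congr fun n => by ring
  rw [hH, hx2]
  rw [show (∑' n : ℕ, (-1:ℝ) ^ n * cb (n + 1) * x ^ (n + 1))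
      = ∑' n : ℕ, -((-1:ℝ) ^ (n+1) * cb (n + 1) * x ^ (n + 1)) from
    tsum_congr fun n => by rw [pow_succ]; ring]
  rw [tsum_neg]
  ring

lemma Ef_zero : Ef 0 = 1 / 2 := by
  unfold Ef
  rw [tsum_eq_single 0 (fun n hn => by simp [zero_pow hn])]
  simp [cb_one]

lemma Ef_eq {x : ℝ} (hx : x ∈ Ioo (-1 : ℝ) 1) :
    Ef x = 1 / (Real.sqrt (1 + x) * (1 + Real.sqrt (1 + x))) := by
  have h1 : (0:ℝ) < 1 + x := by linarith [hx.1]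
  have hs : 0 < Real.sqrt (1 + x) := Real.sqrt_pos.mpr h1
  have hsq : Real.sqrt (1 + x) ^ 2 = 1 + x := Real.sq_sqrt h1.le
  rcases eq_or_ne x 0 with rfl | hx0
  · rw [Ef_zero]; norm_num
  · have h2 := xEf (abs_lt_of_mem hx)
    have h3 := Hf_sqrt hx
    set s := Real.sqrt (1 + x)
    have hkey : x * (Ef x * (s * (1 + s))) = x * 1 := by
      linear_combination (s * (1 + s)) * h2 - (1 + s) * h3 + hsq
    have := mul_left_cancel₀ hx0 hkey
    rw [eq_div_iff (by positivity)]
    linarith [this]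

lemma hasDerivAt_Gf {x : ℝ} (hx : x ∈ Ioo (-1 : ℝ) 1) : HasDerivAt Gf (Ef x) x := by
  have h1 : (0:ℝ) < 1 + x := by linarith [hx.1]
  have hs : 0 < Real.sqrt (1 + x) := Real.sqrt_pos.mpr h1
  set s := Real.sqrt (1 + x) with hsdef
  have hin : HasDerivAt (fun y : ℝ => (1 + Real.sqrt (1 + y)) / 2) (1 / (2 * s) / 2) x :=
    ((hasDerivAt_sqrt1p hx.1).const_add 1).div_const 2
  have hpos : (1 + s) / 2 ≠ 0 := by positivity
  have hlog := (Real.hasDerivAt_log hpos).comp x hin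
  have := hlog.const_mul 2
  refine this.congr_deriv (Eq.symm ?_)
  rw [Ef_eq hx]
  field_simp
  ring

lemma Ff_zero : Ff 0 = 0 := by
  unfold Ff
  rw [tsum_eq_single 0 (fun n hn => by simp)] <;> simp

lemma Gf_zero : Gf 0 = 0 := by
  simp [Gf]

lemma Ff_eq_Gf {x : ℝ} (hx : x ∈ Ioo (-1 : ℝ) 1) : Ff x = Gf x := by
  have h0 : (0:ℝ) ∈ Ioo (-1:ℝ) 1 := by norm_num
  have key : ∀ z ∈ Ioo (-1:ℝ) 1, HasDerivAt (fun y => Ff y - Gf y) 0 z := fun z hz => by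
    exact ((hasDerivAt_Ff (abs_lt_of_mem hz)).sub (hasDerivAt_Gf hz)).congr_deriv (sub_self _)
  have := const_on_Ioo key hx h0
  simp only [Ff_zero, Gf_zero, sub_zero] at this
  linarith [this]

-- the statement's summand
noncomputable def fs (n : ℕ) : ℝ :=
  (-1 : ℝ) ^ ((n + 1) + 1) * (Nat.choose (2 * (n + 1)) (n + 1) : ℝ) / ((n + 1 : ℝ) * 4 ^ (n + 1))

lemma fs_eq (n : ℕ) : fs n = (-1) ^ n * cb (n + 1) / ((n : ℝ) + 1) := by
  unfold fs cb
  rw [Nat.centralBinom_eq_two_mul_choose]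
  rw [pow_succ, pow_succ]
  push_cast
  have h1 : ((n:ℝ) + 1) ≠ 0 := by positivity
  have h2 : ((4:ℝ)) ^ n ≠ 0 := by positivity
  field_simp

lemma cb_le_inv_sqrt (n : ℕ) : cb (n + 1) ≤ 1 / Real.sqrt ((n : ℝ) + 1) := by
  have h1 : cb (n+1) ^ 2 ≤ 1 / ((n : ℝ) + 1) := by
    have := cb_sq (n + 1)
    have h2 : (0:ℝ) < (n:ℝ) + 1 := by positivity
    rw [div_eq_inv_mul, le_inv_mul_iff₀ h2]
    push_cast at this ⊢
    nlinarith [sq_nonneg (cb (n+1))]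
  have h3 : cb (n+1) ≤ Real.sqrt (cb (n+1) ^ 2) := by
    rw [Real.sqrt_sq (cb_pos (n+1)).le]
  calc cb (n+1) ≤ Real.sqrt (cb (n+1)^2) := h3
    _ ≤ Real.sqrt (1 / ((n:ℝ)+1)) := Real.sqrt_le_sqrt h1
    _ = 1 / Real.sqrt ((n:ℝ)+1) := by
        rw [one_div, one_div, Real.sqrt_inv]

lemma summable_fs : Summable fs := by
  have hb : ∀ n : ℕ, ‖fs n‖ ≤ 1 / ((n : ℝ) + 1) ^ ((3:ℝ)/2) := by
    intro n
    rw [fs_eq, norm_div, norm_mul, Real.norm_eq_abs, Real.norm_eq_abs, Real.norm_eq_abs,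
      abs_pow, abs_neg, abs_one, one_pow, one_mul, abs_of_nonneg (cb_pos _).le,
      abs_of_pos (by positivity : (0:ℝ) < (n:ℝ)+1)]
    have h1 : ((n:ℝ)+1) ^ ((3:ℝ)/2) = ((n:ℝ)+1) * Real.sqrt ((n:ℝ)+1) := by
      rw [show ((3:ℝ)/2) = 1 + 1/2 by norm_num, Real.rpow_add (by positivity), Real.rpow_one,
        ← Real.sqrt_eq_rpow]
    rw [h1, div_le_div_iff₀ (by positivity) (by positivity)]
    have h2 := cb_le_inv_sqrt n
    have h3 : 0 < Real.sqrt ((n:ℝ)+1) := Real.sqrt_pos.mpr (by positivity : (0:ℝ) < (n:ℝ)+1)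
    have h5 : 1 / Real.sqrt ((n:ℝ)+1) * (((n:ℝ)+1) * Real.sqrt ((n:ℝ)+1)) = (n:ℝ)+1 := by
      field_simp
    have h4 := mul_le_mul_of_nonneg_right h2
      (by positivity : (0:ℝ) ≤ ((n:ℝ)+1) * Real.sqrt ((n:ℝ)+1))
    rw [h5] at h4
    linarith
  refine Summable.of_norm_bounded ?_ hb
  have := Real.summable_one_div_nat_rpow.mpr (show (1:ℝ) < 3/2 by norm_num)
  rw [← summable_nat_add_iff 1] at this
  refine this.congr fun n => ?_
  push_cast
  norm_num

lemma Gf_cont : ContinuousAt Gf 1 := by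
  have h1 : Continuous fun x : ℝ => (1 + Real.sqrt (1 + x)) / 2 :=
    ((continuous_const.add (Real.continuous_sqrt.comp (continuous_const.add continuous_id))).div_const 2)
  have h2 : (1 + Real.sqrt (1 + 1)) / 2 ≠ 0 := by positivity
  have h3 : ContinuousAt (fun x : ℝ => Real.log ((1 + Real.sqrt (1 + x)) / 2)) 1 :=
    ContinuousAt.comp (x := (1:ℝ)) (Real.continuousAt_log h2) h1.continuousAt
  exact continuousAt_const.mul h3

/-- The alternating series of central binomial coefficients
∑_{n=1}^∞ (-1)^{n+1} · C(2n, n) / (n · 4^n) converges and equals 2 · log((√2 + 1)/2). -/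
theorem lehmer_corrected_1 :
    HasSum (fun n : ℕ =>
      (-1 : ℝ) ^ ((n + 1) + 1) * (Nat.choose (2 * (n + 1)) (n + 1) : ℝ) /
        ((n + 1 : ℝ) * 4 ^ (n + 1)))
      (2 * Real.log ((Real.sqrt 2 + 1) / 2)) := by
  have hsum : Summable fs := summable_fs
  set l := ∑' n, fs n with hl
  have habel : Tendsto (fun x : ℝ => ∑' n, fs n * x ^ n) (𝓝[<] 1) (𝓝 l) :=
    Real.tendsto_tsum_powerSeries_nhdsWithin_lt hsum.hasSum.tendsto_sum_nat
  have hG : Tendsto (fun x : ℝ => Gf x / x) (𝓝[<] 1) (𝓝 (Gf 1)) := by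
    have h1 : Tendsto Gf (𝓝[<] 1) (𝓝 (Gf 1)) := Gf_cont.tendsto.mono_left nhdsWithin_le_nhds
    have h2 : Tendsto (fun x : ℝ => x) (𝓝[<] (1:ℝ)) (𝓝 1) :=
      tendsto_id.mono_left nhdsWithin_le_nhds
    have := h1.div h2 one_ne_zero
    rw [div_one] at this
    exact this
  have heq : ∀ᶠ x in 𝓝[<] (1:ℝ), (fun x : ℝ => ∑' n, fs n * x ^ n) x = Gf x / x := by
    filter_upwards [Ioo_mem_nhdsLT_of_mem (show (1:ℝ) ∈ Ioc (0:ℝ) 1 by norm_num)] with x hx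
    have hx0 : x ≠ 0 := ne_of_gt hx.1
    have hmem : x ∈ Ioo (-1:ℝ) 1 := ⟨by linarith [hx.1], hx.2⟩
    have hxF : x * ∑' n, fs n * x ^ n = Ff x := by
      rw [← tsum_mul_left]
      unfold Ff
      refine tsum_congr fun n => ?_
      rw [fs_eq, pow_succ]
      ring
    rw [eq_div_iff hx0, mul_comm (∑' n, fs n * x ^ n) x, hxF, Ff_eq_Gf hmem]
  have hlim := habel.congr' heq
  have hne : (𝓝[<] (1:ℝ)).NeBot := inferInstance
  have hlG : l = Gf 1 := tendsto_nhds_unique hlim hG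
  have hval : Gf 1 = 2 * Real.log ((Real.sqrt 2 + 1) / 2) := by
    unfold Gf
    norm_num [add_comm]
  have : HasSum fs l := hsum.hasSum
  rw [hlG, hval] at this
  exact this
end

section
/- For every real number x with 0 < x ≤ 1/4, the series x · ∑_{n=1}^∞ C(2n, n) / (n(n+1)) · xⁿ converges and equals 2x · log((1 − √(1 − 4x))/x) + √(1 − 4x)/2 − x · (log 4 − 1) − 1/2. -/
open Real Filter Set Topology

noncomputable section

namespace LehmerAux

/-- the central binomial coefficient, as a real number -/
def cb (m : ℕ) : ℝ := (Nat.centralBinom m : ℝ)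

lemma cb_nonneg (m : ℕ) : 0 ≤ cb m := Nat.cast_nonneg _

lemma cb_zero : cb 0 = 1 := by norm_num [cb, Nat.centralBinom]

lemma cb_one : cb 1 = 2 := by norm_num [cb, Nat.centralBinom]

lemma cb_succ_le (n : ℕ) : Nat.centralBinom (n + 1) ≤ 4 * Nat.centralBinom n := by
  have h := Nat.succ_mul_centralBinom_succ n
  have h2 : (n + 1) * Nat.centralBinom (n + 1) ≤ (n + 1) * (4 * Nat.centralBinom n) := by
    calc (n + 1) * Nat.centralBinom (n + 1) = 2 * (2 * n + 1) * Nat.centralBinom n := h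
      _ ≤ ((n + 1) * 4) * Nat.centralBinom n := Nat.mul_le_mul_right _ (by omega)
      _ = (n + 1) * (4 * Nat.centralBinom n) := by ring
  exact Nat.le_of_mul_le_mul_left h2 (Nat.succ_pos n)

lemma cb_le (m : ℕ) : cb m ≤ 4 ^ m := by
  induction m with
  | zero => simp [cb_zero]
  | succ n ih =>
    have h' : cb (n + 1) ≤ 4 * cb n := by
      have := cb_succ_le n
      unfold cb
      exact_mod_cast this
    calc cb (n + 1) ≤ 4 * cb n := h'
      _ ≤ 4 * 4 ^ n := by linarith
      _ = 4 ^ (n + 1) := by ring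

lemma summable_master {r : ℝ} (h0 : 0 ≤ r) (h4 : r < 1 / 4) :
    Summable (fun m : ℕ => ((m : ℝ) + 1) * (4 * r) ^ m) := by
  have h1 : ‖(4 * r : ℝ)‖ < 1 := by
    rw [Real.norm_eq_abs, abs_of_nonneg (by positivity)]; linarith
  have h2 := summable_pow_mul_geometric_of_norm_lt_one (R := ℝ) 1 h1
  have h3 := summable_geometric_of_norm_lt_one h1
  refine (h2.add h3).congr fun m => ?_
  push_cast; ring


lemma one_le_cast_add_one (m : ℕ) : (1 : ℝ) ≤ (m : ℝ) + 1 := by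
  have : (0:ℝ) ≤ (m : ℝ) := Nat.cast_nonneg m
  linarith

lemma summable_of_le_master {x : ℝ} (hx : |x| < 1 / 4) {f : ℕ → ℝ} (K : ℝ)
    (hf : ∀ m, ‖f m‖ ≤ K * (((m : ℝ) + 1) * (4 * |x|) ^ m)) : Summable f :=
  Summable.of_norm_bounded ((summable_master (abs_nonneg x) hx).mul_left K) hf

lemma summable_S1 {x : ℝ} (hx : |x| < 1 / 4) : Summable (fun m : ℕ => cb m * x ^ m) := by
  refine summable_of_le_master hx 1 fun m => ?_
  rw [one_mul, Real.norm_eq_abs, abs_mul, abs_pow, abs_of_nonneg (cb_nonneg m)]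
  have h1 : cb m ≤ 4 ^ m := cb_le m
  calc cb m * |x| ^ m ≤ 4 ^ m * |x| ^ m := by gcongr
    _ = (4 * |x|) ^ m := by rw [mul_pow]
    _ ≤ ((m : ℝ) + 1) * (4 * |x|) ^ m :=
        le_mul_of_one_le_left (by positivity) (one_le_cast_add_one m)

lemma summable_SB {x : ℝ} (hx : |x| < 1 / 4) :
    Summable (fun m : ℕ => (m : ℝ) * cb m * x ^ m) := by
  refine summable_of_le_master hx 1 fun m => ?_
  rw [one_mul, Real.norm_eq_abs, abs_mul, abs_mul, abs_pow, abs_of_nonneg (cb_nonneg m),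
    abs_of_nonneg (Nat.cast_nonneg m)]
  have h1 : cb m ≤ 4 ^ m := cb_le m
  have h2 : (m : ℝ) ≤ (m : ℝ) + 1 := by linarith
  calc (m : ℝ) * cb m * |x| ^ m ≤ ((m : ℝ) + 1) * 4 ^ m * |x| ^ m := by
        gcongr
        exact cb_nonneg m
    _ = ((m : ℝ) + 1) * (4 * |x|) ^ m := by rw [mul_pow]; ring

lemma summable_Ec {x : ℝ} (hx : |x| < 1 / 4) :
    Summable (fun m : ℕ => cb (m + 1) * x ^ m) := by
  refine summable_of_le_master hx 4 fun m => ?_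
  rw [Real.norm_eq_abs, abs_mul, abs_pow, abs_of_nonneg (cb_nonneg _)]
  have h1 : cb (m + 1) ≤ 4 ^ (m + 1) := cb_le _
  calc cb (m + 1) * |x| ^ m ≤ 4 ^ (m + 1) * |x| ^ m := by gcongr
    _ = 4 * (4 * |x|) ^ m := by rw [mul_pow]; ring
    _ ≤ 4 * (((m : ℝ) + 1) * (4 * |x|) ^ m) := by
        have hp : (0:ℝ) ≤ (4 * |x|) ^ m := by positivity
        have hmm : (0:ℝ) ≤ (m : ℝ) := Nat.cast_nonneg m
        nlinarith

lemma summable_SA {x : ℝ} (hx : |x| < 1 / 4) :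
    Summable (fun m : ℕ => ((m : ℝ) + 1) * cb (m + 1) * x ^ m) := by
  refine summable_of_le_master hx 4 fun m => ?_
  rw [Real.norm_eq_abs, abs_mul, abs_mul, abs_pow, abs_of_nonneg (cb_nonneg _),
    abs_of_nonneg (by positivity : (0:ℝ) ≤ (m : ℝ) + 1)]
  have h1 : cb (m + 1) ≤ 4 ^ (m + 1) := cb_le _
  calc ((m : ℝ) + 1) * cb (m + 1) * |x| ^ m ≤ ((m : ℝ) + 1) * 4 ^ (m + 1) * |x| ^ m := by
        gcongr
    _ = 4 * (((m : ℝ) + 1) * (4 * |x|) ^ m) := by rw [mul_pow]; ring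

lemma summable_inv_mul :
    Summable (fun m : ℕ => (1 : ℝ) / (((m : ℝ) + 1) * ((m : ℝ) + 2))) := by
  have h1 : Summable (fun n : ℕ => 1 / (n : ℝ) ^ 2) :=
    summable_one_div_nat_pow.mpr one_lt_two
  have h2 : Summable (fun n : ℕ => 1 / ((n : ℝ) + 1) ^ 2) := by
    have := (summable_nat_add_iff (f := fun n : ℕ => 1 / (n : ℝ) ^ 2) 1).mpr h1
    refine this.congr fun n => ?_
    push_cast; ring_nf
  refine h2.of_nonneg_of_le (fun m => by positivity) fun m => ?_
  have hm : (0:ℝ) ≤ (m : ℝ) := Nat.cast_nonneg m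
  apply one_div_le_one_div_of_le (by positivity)
  nlinarith

lemma summable_Sf {x : ℝ} (hx : |x| ≤ 1 / 4) :
    Summable (fun m : ℕ => cb (m + 1) / (((m : ℝ) + 1) * ((m : ℝ) + 2)) * x ^ (m + 2)) := by
  refine Summable.of_norm_bounded (summable_inv_mul.mul_left (1/4)) fun m => ?_
  have hm : (0:ℝ) ≤ (m : ℝ) := Nat.cast_nonneg m
  rw [Real.norm_eq_abs, abs_mul, abs_pow, abs_div,
    abs_of_nonneg (cb_nonneg _), abs_of_nonneg (by positivity : (0:ℝ) ≤ ((m:ℝ)+1)*((m:ℝ)+2))]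
  have h1 : cb (m + 1) ≤ 4 ^ (m + 1) := cb_le _
  have h2 : |x| ^ (m + 2) ≤ (1/4 : ℝ) ^ (m + 2) := pow_le_pow_left₀ (abs_nonneg x) hx _
  have h3 : (4:ℝ) ^ (m + 1) * (1/4) ^ (m + 2) = 1/4 := by
    have h4 : ((4:ℝ) ^ (m + 2)) = 4 ^ (m + 1) * 4 := by ring
    rw [one_div, inv_pow, h4, mul_inv, ← mul_assoc,
      mul_inv_cancel₀ (by positivity : ((4:ℝ) ^ (m + 1)) ≠ 0), one_mul]
  calc cb (m + 1) / (((m : ℝ) + 1) * ((m : ℝ) + 2)) * |x| ^ (m + 2)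
      ≤ 4 ^ (m + 1) / (((m : ℝ) + 1) * ((m : ℝ) + 2)) * (1/4) ^ (m + 2) := by gcongr
    _ = 1/4 * (1 / (((m : ℝ) + 1) * ((m : ℝ) + 2))) := by
        rw [div_mul_eq_mul_div, h3]; ring


def Tc (x : ℝ) : ℝ := ∑' m : ℕ, cb (m + 1) * x ^ (m + 1)
def Hc (x : ℝ) : ℝ := 1 + Tc x
def Dc (x : ℝ) : ℝ := ∑' m : ℕ, ((m : ℝ) + 1) * cb (m + 1) * x ^ m
def Ec (x : ℝ) : ℝ := ∑' m : ℕ, cb (m + 1) * x ^ m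
def Gc (x : ℝ) : ℝ := ∑' m : ℕ, cb (m + 1) / ((m : ℝ) + 1) * x ^ (m + 1)
def Fc (x : ℝ) : ℝ := ∑' m : ℕ, cb (m + 1) / (((m : ℝ) + 1) * ((m : ℝ) + 2)) * x ^ (m + 2)

/-- common setup for the radius -/
lemma radius_setup {x : ℝ} (hx : |x| < 1 / 4) :
    0 < (|x| + 1/4)/2 ∧ |x| < (|x| + 1/4)/2 ∧ (|x| + 1/4)/2 < 1/4 := by
  have := abs_nonneg x
  refine ⟨by linarith, by linarith, by linarith⟩

lemma bound_aux {r y : ℝ} (hr0 : 0 < r) (hy : y ∈ Ioo (-r) r) (n : ℕ) {a : ℝ}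
    (ha0 : 0 ≤ a) (ha : a ≤ 4 ^ (n + 1)) :
    ‖a * y ^ n‖ ≤ 4 * (4 * r) ^ n := by
  have hyr : |y| ≤ r := le_of_lt (abs_lt.mpr ⟨hy.1, hy.2⟩)
  rw [Real.norm_eq_abs, abs_mul, abs_pow, abs_of_nonneg ha0]
  calc a * |y| ^ n ≤ 4 ^ (n + 1) * r ^ n := by gcongr
    _ = 4 * (4 * r) ^ n := by rw [mul_pow]; ring

lemma bound_aux2 {r y : ℝ} (hr0 : 0 < r) (hr1 : r ≤ 1) (hy : y ∈ Ioo (-r) r) (n : ℕ) {a : ℝ}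
    (ha0 : 0 ≤ a) (ha : a ≤ 4 ^ (n + 1)) :
    ‖a * y ^ (n + 1)‖ ≤ 4 * (4 * r) ^ n := by
  have hyr : |y| ≤ r := le_of_lt (abs_lt.mpr ⟨hy.1, hy.2⟩)
  rw [Real.norm_eq_abs, abs_mul, abs_pow, abs_of_nonneg ha0]
  have hp : (0:ℝ) ≤ (4 * r) ^ n := by positivity
  calc a * |y| ^ (n + 1) ≤ 4 ^ (n + 1) * r ^ (n + 1) := by gcongr
    _ = (4 * r) ^ n * (4 * r) := by rw [mul_pow]; ring
    _ ≤ (4 * r) ^ n * 4 := by nlinarith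
    _ = 4 * (4 * r) ^ n := by ring

lemma bound_auxT {r y : ℝ} (hr0 : 0 < r) (hy : y ∈ Ioo (-r) r) (n : ℕ) :
    ‖cb (n + 1) * (((n : ℝ) + 1) * y ^ n)‖ ≤ 4 * (((n : ℝ) + 1) * (4 * r) ^ n) := by
  have hyr : |y| ≤ r := le_of_lt (abs_lt.mpr ⟨hy.1, hy.2⟩)
  have hn1 : (0:ℝ) ≤ (n : ℝ) + 1 := by positivity
  rw [Real.norm_eq_abs, abs_mul, abs_mul, abs_pow, abs_of_nonneg (cb_nonneg _),
    abs_of_nonneg hn1]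
  have h1 : cb (n + 1) ≤ 4 ^ (n + 1) := cb_le _
  calc cb (n + 1) * (((n : ℝ) + 1) * |y| ^ n) ≤ 4 ^ (n + 1) * (((n : ℝ) + 1) * r ^ n) := by
        gcongr
    _ = 4 * (((n : ℝ) + 1) * (4 * r) ^ n) := by rw [mul_pow]; ring

lemma bound_aux' {r : ℝ} (hr0 : 0 < r) (n : ℕ) :
    4 * (4 * r) ^ n ≤ 4 * (((n : ℝ) + 1) * (4 * r) ^ n) := by
  have hp : (0:ℝ) ≤ (4 * r) ^ n := by positivity
  nlinarith [one_le_cast_add_one n]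

lemma hasDerivAt_Tc {x : ℝ} (hx : |x| < 1 / 4) : HasDerivAt Tc (Dc x) x := by
  obtain ⟨hr0, hxr, hr4⟩ := radius_setup hx
  set r : ℝ := (|x| + 1/4)/2 with hrdef
  have key := hasDerivAt_tsum_of_isPreconnected
    (u := fun m : ℕ => 4 * (((m : ℝ) + 1) * (4 * r) ^ m))
    (g := fun m (y : ℝ) => cb (m + 1) * y ^ (m + 1))
    (g' := fun m (y : ℝ) => cb (m + 1) * (((m : ℝ) + 1) * y ^ m))
    (((summable_master hr0.le hr4).mul_left 4)) (isOpen_Ioo (a := -r) (b := r))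
    (isPreconnected_Ioo)
    (fun n y _ => by
      have h := (hasDerivAt_pow (n + 1) y).const_mul (cb (n + 1))
      refine h.congr_deriv ?_
      push_cast [Nat.add_sub_cancel]
      ring)
    (fun n y hy => bound_auxT hr0 hy n)
    (y₀ := 0) (mem_Ioo.mpr ⟨by linarith, hr0⟩)
    (by
      refine summable_zero.congr fun n => ?_
      show (0:ℝ) = cb (n + 1) * (0:ℝ) ^ (n + 1)
      rw [zero_pow (Nat.succ_ne_zero n), mul_zero])
    (mem_Ioo.mpr (abs_lt.mp hxr))
  have h2 : Dc x = ∑' m : ℕ, cb (m + 1) * (((m : ℝ) + 1) * x ^ m) :=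
    tsum_congr fun m => by ring
  rw [show Dc x = ∑' m : ℕ, cb (m + 1) * (((m : ℝ) + 1) * x ^ m) from h2]
  exact key

lemma hasDerivAt_Gc {x : ℝ} (hx : |x| < 1 / 4) : HasDerivAt Gc (Ec x) x := by
  obtain ⟨hr0, hxr, hr4⟩ := radius_setup hx
  set r : ℝ := (|x| + 1/4)/2 with hrdef
  have key := hasDerivAt_tsum_of_isPreconnected
    (u := fun m : ℕ => 4 * (((m : ℝ) + 1) * (4 * r) ^ m))
    (g := fun m (y : ℝ) => cb (m + 1) / ((m : ℝ) + 1) * y ^ (m + 1))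
    (g' := fun m (y : ℝ) => cb (m + 1) * y ^ m)
    (((summable_master hr0.le hr4).mul_left 4)) (isOpen_Ioo (a := -r) (b := r))
    (isPreconnected_Ioo)
    (fun n y _ => by
      have h := (hasDerivAt_pow (n + 1) y).const_mul (cb (n + 1) / ((n : ℝ) + 1))
      refine h.congr_deriv ?_
      have hne : ((n : ℝ) + 1) ≠ 0 := by positivity
      push_cast [Nat.add_sub_cancel]
      field_simp)
    (fun n y hy =>
      (bound_aux hr0 hy n (cb_nonneg _) (cb_le _)).trans (bound_aux' hr0 n))
    (y₀ := 0) (mem_Ioo.mpr ⟨by linarith, hr0⟩)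
    (by
      refine summable_zero.congr fun n => ?_
      show (0:ℝ) = cb (n + 1) / ((n : ℝ) + 1) * (0:ℝ) ^ (n + 1)
      rw [zero_pow (Nat.succ_ne_zero n), mul_zero])
    (mem_Ioo.mpr (abs_lt.mp hxr))
  exact key

lemma hasDerivAt_Fc {x : ℝ} (hx : |x| < 1 / 4) : HasDerivAt Fc (Gc x) x := by
  obtain ⟨hr0, hxr, hr4⟩ := radius_setup hx
  set r : ℝ := (|x| + 1/4)/2 with hrdef
  have key := hasDerivAt_tsum_of_isPreconnected
    (u := fun m : ℕ => 4 * (((m : ℝ) + 1) * (4 * r) ^ m))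
    (g := fun m (y : ℝ) => cb (m + 1) / (((m : ℝ) + 1) * ((m : ℝ) + 2)) * y ^ (m + 2))
    (g' := fun m (y : ℝ) => cb (m + 1) / ((m : ℝ) + 1) * y ^ (m + 1))
    (((summable_master hr0.le hr4).mul_left 4)) (isOpen_Ioo (a := -r) (b := r))
    (isPreconnected_Ioo)
    (fun n y _ => by
      have h := (hasDerivAt_pow (n + 2) y).const_mul
        (cb (n + 1) / (((n : ℝ) + 1) * ((n : ℝ) + 2)))
      refine h.congr_deriv ?_
      have hne : ((n : ℝ) + 1) ≠ 0 := by positivity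
      have hne2 : ((n : ℝ) + 2) ≠ 0 := by positivity
      push_cast [show n + 2 - 1 = n + 1 from rfl]
      field_simp)
    (fun n y hy => by
      have ha : cb (n + 1) / ((n : ℝ) + 1) ≤ 4 ^ (n + 1) := by
        refine (div_le_self (cb_nonneg _) (one_le_cast_add_one n)).trans (cb_le _)
      refine (bound_aux2 hr0 (by linarith) hy n ?_ ha).trans (bound_aux' hr0 n)
      exact div_nonneg (cb_nonneg _) (by positivity))
    (y₀ := 0) (mem_Ioo.mpr ⟨by linarith, hr0⟩)
    (by
      refine summable_zero.congr fun n => ?_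
      show (0:ℝ) = cb (n + 1) / (((n : ℝ) + 1) * ((n : ℝ) + 2)) * (0:ℝ) ^ (n + 2)
      rw [zero_pow (by omega : n + 2 ≠ 0), mul_zero])
    (mem_Ioo.mpr (abs_lt.mp hxr))
  exact key

lemma hasDerivAt_Hc {x : ℝ} (hx : |x| < 1 / 4) : HasDerivAt Hc (Dc x) x := by
  have h := (hasDerivAt_const x (1:ℝ)).add (hasDerivAt_Tc hx)
  exact h.congr_deriv (zero_add _)

lemma cb_rec (m : ℕ) : ((m : ℝ) + 1) * cb (m + 1) = (4 * (m : ℝ) + 2) * cb m := by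
  have h := Nat.succ_mul_centralBinom_succ m
  have h' : ((m : ℝ) + 1) * (Nat.centralBinom (m + 1) : ℝ)
      = 2 * (2 * (m : ℝ) + 1) * (Nat.centralBinom m : ℝ) := by exact_mod_cast h
  unfold cb
  linarith

lemma tsum_S1_eq {x : ℝ} (hx : |x| < 1 / 4) : ∑' m : ℕ, cb m * x ^ m = Hc x := by
  rw [Summable.tsum_eq_zero_add (summable_S1 hx), cb_zero]
  simp only [pow_zero, mul_one]
  rfl

lemma ode {x : ℝ} (hx : |x| < 1 / 4) : (1 - 4 * x) * Dc x = 2 * Hc x := by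
  have hB : ∑' m : ℕ, ((m : ℝ) * cb m * x ^ m) = x * Dc x := by
    rw [Summable.tsum_eq_zero_add (summable_SB hx)]
    simp only [Nat.cast_zero, zero_mul, zero_add]
    rw [Dc.eq_def, ← tsum_mul_left]
    exact tsum_congr fun m => by push_cast; ring
  have h4 : Summable (fun m : ℕ => 4 * ((m : ℝ) * cb m * x ^ m)) := (summable_SB hx).mul_left 4
  have h2 : Summable (fun m : ℕ => 2 * (cb m * x ^ m)) := (summable_S1 hx).mul_left 2
  have key : Dc x = 4 * (x * Dc x) + 2 * Hc x := by
    have h0 : Dc x = ∑' m : ℕ, (4 * ((m : ℝ) * cb m * x ^ m) + 2 * (cb m * x ^ m)) := by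
      rw [Dc.eq_def]
      exact tsum_congr fun m => by linear_combination x ^ m * cb_rec m
    calc Dc x = ∑' m : ℕ, (4 * ((m : ℝ) * cb m * x ^ m) + 2 * (cb m * x ^ m)) := h0
      _ = (∑' m : ℕ, 4 * ((m : ℝ) * cb m * x ^ m)) + ∑' m : ℕ, 2 * (cb m * x ^ m) :=
          Summable.tsum_add h4 h2
      _ = 4 * ∑' m : ℕ, ((m : ℝ) * cb m * x ^ m) + 2 * ∑' m : ℕ, (cb m * x ^ m) := by
          rw [tsum_mul_left, tsum_mul_left]
      _ = 4 * (x * Dc x) + 2 * Hc x := by rw [hB, tsum_S1_eq hx]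
  linear_combination key

lemma hasDerivAt_sqrt1 {x : ℝ} (hx : x < 1 / 4) :
    HasDerivAt (fun y : ℝ => Real.sqrt (1 - 4 * y)) (-2 / Real.sqrt (1 - 4 * x)) x := by
  have h0 : (0:ℝ) < 1 - 4 * x := by linarith
  have hin : HasDerivAt (fun y : ℝ => 1 - 4 * y) (-4 : ℝ) x := by
    exact ((hasDerivAt_const x (1:ℝ)).sub ((hasDerivAt_id x).const_mul (4:ℝ))).congr_deriv (by ring)
  have h := hin.sqrt h0.ne'
  convert h using 1
  rw [div_eq_div_iff (by positivity : (0:ℝ) < Real.sqrt (1-4*x)).ne'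
    (by positivity : (0:ℝ) < 2 * Real.sqrt (1 - 4*x)).ne']
  ring

lemma Hc_eq {x : ℝ} (hx0 : 0 ≤ x) (hx : x < 1 / 4) : Hc x * Real.sqrt (1 - 4 * x) = 1 := by
  have habs : ∀ y, y ∈ Icc 0 x → |y| < 1 / 4 := fun y hy => by
    rw [abs_of_nonneg hy.1]; exact lt_of_le_of_lt hy.2 hx
  have main := constant_of_has_deriv_right_zero
    (f := fun y => Hc y * Real.sqrt (1 - 4 * y)) (a := 0) (b := x)
    (fun y hy => (((hasDerivAt_Hc (habs y hy)).mul
      (hasDerivAt_sqrt1 (lt_of_le_of_lt hy.2 hx))).continuousAt).continuousWithinAt)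
    (fun y hy => by
      have hy4 : |y| < 1 / 4 := habs y ⟨hy.1, hy.2.le⟩
      have hylt : y < 1 / 4 := lt_trans hy.2 hx
      have hs : 0 < Real.sqrt (1 - 4 * y) := Real.sqrt_pos.mpr (by linarith)
      have hsq : Real.sqrt (1 - 4 * y) ^ 2 = 1 - 4 * y := Real.sq_sqrt (by linarith)
      have hD := (hasDerivAt_Hc hy4).mul (hasDerivAt_sqrt1 hylt)
      have hzero : Dc y * Real.sqrt (1 - 4 * y) + Hc y * (-2 / Real.sqrt (1 - 4 * y)) = 0 := by
        have hode := ode hy4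
        have h1 : Dc y * Real.sqrt (1 - 4 * y) = 2 * Hc y / Real.sqrt (1 - 4 * y) := by
          rw [eq_div_iff hs.ne']
          linear_combination Dc y * hsq + hode
        rw [h1]
        ring
      rw [hzero] at hD
      exact hD.hasDerivWithinAt)
    x (right_mem_Icc.mpr hx0)
  have main' : Hc x * Real.sqrt (1 - 4 * x) = Hc 0 * Real.sqrt (1 - 4 * 0) := main
  have hT0 : Tc 0 = 0 := by
    rw [Tc.eq_def]
    rw [tsum_congr (fun m : ℕ => by
      rw [zero_pow (Nat.succ_ne_zero m), mul_zero] : ∀ m : ℕ, cb (m+1) * (0:ℝ)^(m+1) = 0)]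
    exact tsum_zero
  rw [main', Hc.eq_def, hT0]
  norm_num

lemma Hc_val {x : ℝ} (hx0 : 0 ≤ x) (hx : x < 1 / 4) :
    Hc x = 1 / Real.sqrt (1 - 4 * x) := by
  have hs : 0 < Real.sqrt (1 - 4 * x) := Real.sqrt_pos.mpr (by linarith)
  rw [eq_div_iff hs.ne']
  exact Hc_eq hx0 hx

lemma Ec_val {x : ℝ} (hx0 : 0 ≤ x) (hx : x < 1 / 4) :
    Ec x = 4 / (Real.sqrt (1 - 4 * x) * (1 + Real.sqrt (1 - 4 * x))) := by
  rcases eq_or_lt_of_le hx0 with h0 | h0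
  · subst h0
    have : Ec 0 = cb 1 := by
      rw [Ec.eq_def]
      rw [tsum_eq_single 0 (fun b hb => by rw [zero_pow hb, mul_zero])]
      norm_num
    rw [this, cb_one]
    norm_num
  · have hs : 0 < Real.sqrt (1 - 4 * x) := Real.sqrt_pos.mpr (by linarith)
    have hsq : Real.sqrt (1 - 4 * x) ^ 2 = 1 - 4 * x := Real.sq_sqrt (by linarith)
    have h1s : 0 < 1 + Real.sqrt (1 - 4 * x) := by linarith
    have hTc : Tc x = x * Ec x := by
      rw [Tc.eq_def, Ec.eq_def, ← tsum_mul_left]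
      exact tsum_congr fun m => by ring
    have h2 : Real.sqrt (1 - 4 * x) + x * Ec x * Real.sqrt (1 - 4 * x) = 1 := by
      have hH := Hc_eq hx0 hx
      have hHx : Hc x = 1 + x * Ec x := by rw [Hc.eq_def, hTc]
      rw [hHx] at hH
      linear_combination hH
    rw [eq_div_iff (by positivity)]
    have h3 : x * (Ec x * (Real.sqrt (1 - 4 * x) * (1 + Real.sqrt (1 - 4 * x)))) = x * 4 := by
      linear_combination (1 + Real.sqrt (1 - 4 * x)) * h2 - hsq
    have := mul_left_cancel₀ h0.ne' h3
    linarith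


def psi (x : ℝ) : ℝ := Real.log 4 - 2 * Real.log (1 + Real.sqrt (1 - 4 * x))

def phi (x : ℝ) : ℝ :=
  x * Real.log 4 - 2 * x * Real.log (1 + Real.sqrt (1 - 4 * x))
    + Real.sqrt (1 - 4 * x) / 2 + x - 1 / 2

lemma sqrt1_pos {x : ℝ} (hx : x < 1 / 4) : 0 < Real.sqrt (1 - 4 * x) :=
  Real.sqrt_pos.mpr (by linarith)

lemma one_add_sqrt1_pos (x : ℝ) : 0 < 1 + Real.sqrt (1 - 4 * x) := by
  have := Real.sqrt_nonneg (1 - 4 * x); linarith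

lemma hasDerivAt_log1s {x : ℝ} (hx : x < 1 / 4) :
    HasDerivAt (fun y : ℝ => Real.log (1 + Real.sqrt (1 - 4 * y)))
      (-2 / (Real.sqrt (1 - 4 * x) * (1 + Real.sqrt (1 - 4 * x)))) x := by
  have hs := sqrt1_pos hx
  have h1s := one_add_sqrt1_pos x
  have hin : HasDerivAt (fun y : ℝ => 1 + Real.sqrt (1 - 4 * y))
      (-2 / Real.sqrt (1 - 4 * x)) x := (hasDerivAt_sqrt1 hx).const_add 1
  have h := hin.log h1s.ne'
  convert h using 1
  rw [div_div]

lemma hasDerivAt_psi {x : ℝ} (hx : x < 1 / 4) :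
    HasDerivAt psi (4 / (Real.sqrt (1 - 4 * x) * (1 + Real.sqrt (1 - 4 * x)))) x := by
  have h := (hasDerivAt_const x (Real.log 4)).sub ((hasDerivAt_log1s hx).const_mul 2)
  have he : 0 - 2 * (-2 / (Real.sqrt (1 - 4 * x) * (1 + Real.sqrt (1 - 4 * x))))
      = 4 / (Real.sqrt (1 - 4 * x) * (1 + Real.sqrt (1 - 4 * x))) := by
    ring
  rw [he] at h
  exact h

lemma Gc_zero : Gc 0 = 0 := by
  rw [Gc.eq_def]
  rw [tsum_congr (fun m : ℕ => by
    rw [zero_pow (Nat.succ_ne_zero m), mul_zero] :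
    ∀ m : ℕ, cb (m + 1) / ((m : ℝ) + 1) * (0:ℝ) ^ (m + 1) = 0)]
  exact tsum_zero

lemma psi_zero : psi 0 = 0 := by
  rw [psi.eq_def]
  norm_num
  rw [show (4:ℝ) = 2 ^ 2 by norm_num, Real.log_pow]
  push_cast
  ring

lemma Gc_eq {x : ℝ} (hx0 : 0 ≤ x) (hx : x < 1 / 4) : Gc x = psi x := by
  have habs : ∀ y, y ∈ Icc 0 x → |y| < 1 / 4 := fun y hy => by
    rw [abs_of_nonneg hy.1]; exact lt_of_le_of_lt hy.2 hx
  have main := constant_of_has_deriv_right_zero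
    (f := fun y => Gc y - psi y) (a := 0) (b := x)
    (fun y hy => (((hasDerivAt_Gc (habs y hy)).sub
      (hasDerivAt_psi (lt_of_le_of_lt hy.2 hx))).continuousAt).continuousWithinAt)
    (fun y hy => by
      have hy4 : |y| < 1 / 4 := habs y ⟨hy.1, hy.2.le⟩
      have hylt : y < 1 / 4 := lt_trans hy.2 hx
      have hD := (hasDerivAt_Gc hy4).sub (hasDerivAt_psi hylt)
      rw [Ec_val hy.1 hylt, sub_self] at hD
      exact hD.hasDerivWithinAt)
    x (right_mem_Icc.mpr hx0)
  have main' : Gc x - psi x = Gc 0 - psi 0 := main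
  rw [Gc_zero, psi_zero] at main'
  linarith

lemma Fc_zero : Fc 0 = 0 := by
  rw [Fc.eq_def]
  rw [tsum_congr (fun m : ℕ => by
    rw [zero_pow (by omega : m + 2 ≠ 0), mul_zero] :
    ∀ m : ℕ, cb (m + 1) / (((m : ℝ) + 1) * ((m : ℝ) + 2)) * (0:ℝ) ^ (m + 2) = 0)]
  exact tsum_zero

lemma phi_zero : phi 0 = 0 := by
  rw [phi.eq_def]
  norm_num

lemma hasDerivAt_phi {x : ℝ} (hx : x < 1 / 4) : HasDerivAt phi (psi x) x := by
  have hs := sqrt1_pos hx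
  have h1s := one_add_sqrt1_pos x
  have hsq : Real.sqrt (1 - 4 * x) ^ 2 = 1 - 4 * x := Real.sq_sqrt (by linarith)
  have h1 : HasDerivAt (fun y : ℝ => y * Real.log 4) (Real.log 4) x := by
    simpa using (hasDerivAt_id x).mul_const (Real.log 4)
  have h2 : HasDerivAt (fun y : ℝ => 2 * y * Real.log (1 + Real.sqrt (1 - 4 * y)))
      (2 * Real.log (1 + Real.sqrt (1 - 4 * x))
        + 2 * x * (-2 / (Real.sqrt (1 - 4 * x) * (1 + Real.sqrt (1 - 4 * x))))) x := by
    have ha : HasDerivAt (fun y : ℝ => 2 * y) (2 : ℝ) x := by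
      simpa using (hasDerivAt_id x).const_mul (2:ℝ)
    exact ha.mul (hasDerivAt_log1s hx)
  have h3 : HasDerivAt (fun y : ℝ => Real.sqrt (1 - 4 * y) / 2)
      ((-2 / Real.sqrt (1 - 4 * x)) / 2) x := (hasDerivAt_sqrt1 hx).div_const 2
  have h4 : HasDerivAt (fun y : ℝ => y) (1:ℝ) x := hasDerivAt_id x
  have hall := (((h1.sub h2).add h3).add h4).sub_const (1/2 : ℝ)
  have hphi : phi = fun y : ℝ => y * Real.log 4
      - 2 * y * Real.log (1 + Real.sqrt (1 - 4 * y)) + Real.sqrt (1 - 4 * y) / 2 + y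
      - 1 / 2 := rfl
  rw [hphi]
  refine hall.congr_deriv ?_
  rw [psi.eq_def]
  have key : 4 * x / (Real.sqrt (1 - 4 * x) * (1 + Real.sqrt (1 - 4 * x)))
      - 1 / Real.sqrt (1 - 4 * x) + 1 = 0 := by
    field_simp
    linear_combination hsq
  linear_combination key

lemma Fc_eq {x : ℝ} (hx0 : 0 ≤ x) (hx : x < 1 / 4) : Fc x = phi x := by
  have habs : ∀ y, y ∈ Icc 0 x → |y| < 1 / 4 := fun y hy => by
    rw [abs_of_nonneg hy.1]; exact lt_of_le_of_lt hy.2 hx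
  have main := constant_of_has_deriv_right_zero
    (f := fun y => Fc y - phi y) (a := 0) (b := x)
    (fun y hy => (((hasDerivAt_Fc (habs y hy)).sub
      (hasDerivAt_phi (lt_of_le_of_lt hy.2 hx))).continuousAt).continuousWithinAt)
    (fun y hy => by
      have hy4 : |y| < 1 / 4 := habs y ⟨hy.1, hy.2.le⟩
      have hylt : y < 1 / 4 := lt_trans hy.2 hx
      have hD := (hasDerivAt_Fc hy4).sub (hasDerivAt_phi hylt)
      rw [Gc_eq hy.1 hylt, sub_self] at hD
      exact hD.hasDerivWithinAt)
    x (right_mem_Icc.mpr hx0)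
  have main' : Fc x - phi x = Fc 0 - phi 0 := main
  rw [Fc_zero, phi_zero] at main'
  linarith

lemma Fc_endpoint : Fc (1/4 : ℝ) = phi (1/4 : ℝ) := by
  have hmem : Ioi (0:ℝ) ∈ 𝓝[Iio (1/4:ℝ)] (1/4:ℝ) :=
    mem_nhdsWithin_of_mem_nhds (Ioi_mem_nhds (by norm_num))
  have htend : Tendsto Fc (𝓝[Iio (1/4:ℝ)] (1/4:ℝ)) (𝓝 (Fc (1/4:ℝ))) := by
    refine tendsto_tsum_of_dominated_convergence
      (f := fun (y : ℝ) (m : ℕ) => cb (m + 1) / (((m : ℝ) + 1) * ((m : ℝ) + 2)) * y ^ (m + 2))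
      (bound := fun m : ℕ => 1/4 * ((1:ℝ) / (((m : ℝ) + 1) * ((m : ℝ) + 2))))
      (summable_inv_mul.mul_left (1/4)) (fun k => ?_) ?_
    · exact ((continuous_const.mul (continuous_pow (k + 2))).tendsto _).mono_left
        nhdsWithin_le_nhds
    · filter_upwards [hmem, self_mem_nhdsWithin] with y hy0 hy4 k
      have hyabs : |y| ≤ 1/4 := by
        rw [abs_of_nonneg (le_of_lt hy0)]
        exact le_of_lt hy4
      have hm : (0:ℝ) ≤ (k : ℝ) := Nat.cast_nonneg k
      rw [Real.norm_eq_abs, abs_mul, abs_pow, abs_div, abs_of_nonneg (cb_nonneg _),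
        abs_of_nonneg (by positivity : (0:ℝ) ≤ ((k:ℝ)+1)*((k:ℝ)+2))]
      have h1 : cb (k + 1) ≤ 4 ^ (k + 1) := cb_le _
      have h2 : |y| ^ (k + 2) ≤ (1/4 : ℝ) ^ (k + 2) := pow_le_pow_left₀ (abs_nonneg y) hyabs _
      have h3 : (4:ℝ) ^ (k + 1) * (1/4) ^ (k + 2) = 1/4 := by
        have h4 : ((4:ℝ) ^ (k + 2)) = 4 ^ (k + 1) * 4 := by ring
        rw [one_div, inv_pow, h4, mul_inv, ← mul_assoc,
          mul_inv_cancel₀ (by positivity : ((4:ℝ) ^ (k + 1)) ≠ 0), one_mul]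
      calc cb (k + 1) / (((k : ℝ) + 1) * ((k : ℝ) + 2)) * |y| ^ (k + 2)
          ≤ 4 ^ (k + 1) / (((k : ℝ) + 1) * ((k : ℝ) + 2)) * (1/4) ^ (k + 2) := by gcongr
        _ = 1/4 * (1 / (((k : ℝ) + 1) * ((k : ℝ) + 2))) := by
            rw [div_mul_eq_mul_div, h3]; ring
  have hphic : Tendsto phi (𝓝[Iio (1/4:ℝ)] (1/4:ℝ)) (𝓝 (phi (1/4:ℝ))) := by
    have hsq : ContinuousAt (fun y : ℝ => Real.sqrt (1 - 4 * y)) (1/4) :=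
      (Real.continuous_sqrt.comp (by continuity)).continuousAt
    have hin : ContinuousAt (fun y : ℝ => 1 + Real.sqrt (1 - 4 * y)) (1/4) :=
      continuousAt_const.add hsq
    have hne : (1:ℝ) + Real.sqrt (1 - 4 * (1/4)) ≠ 0 := by
      rw [show (1:ℝ) - 4 * (1/4) = 0 by norm_num, Real.sqrt_zero]
      norm_num
    have hlog : ContinuousAt (fun y : ℝ => Real.log (1 + Real.sqrt (1 - 4 * y))) (1/4) :=
      hin.log hne
    have hphi : ContinuousAt phi (1/4) := by
      rw [show phi = fun y : ℝ => y * Real.log 4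
        - 2 * y * Real.log (1 + Real.sqrt (1 - 4 * y)) + Real.sqrt (1 - 4 * y) / 2 + y
        - 1 / 2 from rfl]
      exact ((((continuousAt_id.mul continuousAt_const).sub
        (((continuousAt_const.mul continuousAt_id)).mul hlog)).add
        (hsq.div_const 2)).add continuousAt_id).sub continuousAt_const
    exact hphi.continuousWithinAt
  have heq : ∀ᶠ y in 𝓝[Iio (1/4:ℝ)] (1/4:ℝ), Fc y = phi y := by
    filter_upwards [hmem, self_mem_nhdsWithin] with y hy0 hy4
    exact Fc_eq (le_of_lt hy0) hy4
  exact tendsto_nhds_unique (htend.congr' heq) hphic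



end LehmerAux

end

/-- For 0 < x ≤ 1/4, the series x · ∑_{n=1}^∞ C(2n,n)/(n(n+1)) · xⁿ converges and equals
2x·log((1 − √(1 − 4x))/x) + √(1 − 4x)/2 − x·(log 4 − 1) − 1/2. -/
theorem lehmer_corrected_eq7 (x : ℝ) (hx0 : 0 < x) (hx : x ≤ 1 / 4) :
    HasSum (fun n : ℕ =>
      x * ((Nat.choose (2 * (n + 1)) (n + 1) : ℝ) / ((n + 1 : ℝ) * (n + 2 : ℝ)) * x ^ (n + 1)))
      (2 * x * Real.log ((1 - Real.sqrt (1 - 4 * x)) / x) + Real.sqrt (1 - 4 * x) / 2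
        - x * (Real.log 4 - 1) - 1 / 2) := by
  have habs : |x| ≤ 1 / 4 := abs_le.mpr ⟨by linarith, hx⟩
  have hsq : Real.sqrt (1 - 4 * x) ^ 2 = 1 - 4 * x := Real.sq_sqrt (by linarith)
  have h1s : (0:ℝ) < 1 + Real.sqrt (1 - 4 * x) := LehmerAux.one_add_sqrt1_pos x
  have hterm : (fun n : ℕ => x * ((Nat.choose (2 * (n + 1)) (n + 1) : ℝ)
        / ((n + 1 : ℝ) * (n + 2 : ℝ)) * x ^ (n + 1)))
      = fun m : ℕ => LehmerAux.cb (m + 1) / (((m : ℝ) + 1) * ((m : ℝ) + 2)) * x ^ (m + 2) := by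
    funext n
    simp only [LehmerAux.cb, Nat.centralBinom]
    push_cast
    ring
  have hFphi : LehmerAux.Fc x = LehmerAux.phi x := by
    rcases lt_or_eq_of_le hx with h | h
    · exact LehmerAux.Fc_eq hx0.le h
    · rw [h]; exact LehmerAux.Fc_endpoint
  have hval : LehmerAux.phi x
      = 2 * x * Real.log ((1 - Real.sqrt (1 - 4 * x)) / x) + Real.sqrt (1 - 4 * x) / 2
        - x * (Real.log 4 - 1) - 1 / 2 := by
    have hlog : Real.log ((1 - Real.sqrt (1 - 4 * x)) / x)
        = Real.log 4 - Real.log (1 + Real.sqrt (1 - 4 * x)) := by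
      rw [← Real.log_div (by norm_num : (4:ℝ) ≠ 0) h1s.ne']
      congr 1
      rw [div_eq_div_iff hx0.ne' h1s.ne']
      linear_combination -hsq
    rw [LehmerAux.phi.eq_def, hlog]
    ring
  rw [hterm, ← hval, ← hFphi]
  exact (LehmerAux.summable_Sf habs).hasSum
end

section
/- The series ∑_{m=1}^∞ (-1)^{m-1} / (m · C(2m, m)) converges and equals 2 · log((1 + √5)/2) / √5. -/
open MeasureTheory intervalIntegral Set


lemma beta_key (m : ℕ) :
    ∫ x in (0:ℝ)..1, x ^ m * (1 - x) ^ (m + 1)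
      = 1 / ((m + 1 : ℝ) * (Nat.choose (2 * (m + 1)) (m + 1) : ℝ)) := by
  have hu : (0:ℝ) < (((m:ℂ)+1)).re := by simp; positivity
  have hv : (0:ℝ) < (((m:ℂ)+2)).re := by simp; positivity
  have h1 : Complex.betaIntegral ((m:ℂ)+1) ((m:ℂ)+2)
      = ((∫ x in (0:ℝ)..1, x ^ m * (1 - x) ^ (m + 1) : ℝ) : ℂ) := by
    rw [Complex.betaIntegral, ← intervalIntegral.integral_ofReal]
    apply intervalIntegral.integral_congr
    intro x _
    have e1 : ((m:ℂ)+1)-1 = ((m : ℕ) : ℂ) := by push_cast; ring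
    have e2 : ((m:ℂ)+2)-1 = (((m+1 : ℕ)) : ℂ) := by push_cast; ring
    rw [e1, e2]
    simp only [Complex.cpow_natCast]
    push_cast; ring
  have h2 := Complex.Gamma_mul_Gamma_eq_betaIntegral hu hv
  have g1 : Complex.Gamma ((m:ℂ)+1) = (Nat.factorial m : ℂ) := by
    exact_mod_cast Complex.Gamma_nat_eq_factorial m
  have g2 : Complex.Gamma ((m:ℂ)+2) = (Nat.factorial (m+1) : ℂ) := by
    have := Complex.Gamma_nat_eq_factorial (m+1)
    rw [← this]; congr 1; push_cast; ring
  have g3 : Complex.Gamma (((m:ℂ)+1)+((m:ℂ)+2)) = (Nat.factorial (2*m+2) : ℂ) := by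
    have := Complex.Gamma_nat_eq_factorial (2*m+2)
    rw [← this]; congr 1; push_cast; ring
  rw [g1, g2, g3, h1] at h2
  have hfac : (Nat.factorial (2*m+2) : ℝ) ≠ 0 := by positivity
  have hre : (Nat.factorial m : ℝ) * (Nat.factorial (m+1) : ℝ)
      = (Nat.factorial (2*m+2) : ℝ) * ∫ x in (0:ℝ)..1, x ^ m * (1 - x) ^ (m + 1) := by
    have := congrArg Complex.re h2
    simp only [← Complex.ofReal_natCast, ← Complex.ofReal_mul, Complex.ofReal_re] at this
    exact_mod_cast this
  have hc := Nat.choose_mul_factorial_mul_factorial (show m+1 ≤ 2*m+2 by omega)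
  have hc' : (2*m+2) - (m+1) = m+1 := by omega
  rw [hc'] at hc
  have hc2 : ((Nat.choose (2*m+2) (m+1) : ℝ)) * (Nat.factorial (m+1)) * (Nat.factorial (m+1))
      = (Nat.factorial (2*m+2)) := by exact_mod_cast congrArg (Nat.cast : ℕ → ℝ) hc
  have h2m : 2*(m+1) = 2*m+2 := by ring
  rw [h2m]
  have hfm1 : (Nat.factorial (m+1) : ℝ) = (m+1) * Nat.factorial m := by
    exact_mod_cast Nat.factorial_succ m
  have hpos : (0:ℝ) < (Nat.choose (2*m+2) (m+1) : ℝ) := by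
    exact_mod_cast Nat.choose_pos (show m+1 ≤ 2*m+2 by omega)
  set I := ∫ x in (0:ℝ)..1, x ^ m * (1 - x) ^ (m + 1) with hI
  have key : (I * (((m:ℝ)+1) * (Nat.choose (2*m+2) (m+1) : ℝ))) * (Nat.factorial (2*m+2) : ℝ)
      = (Nat.factorial (2*m+2) : ℝ) := by
    calc (I * (((m:ℝ)+1) * (Nat.choose (2*m+2) (m+1) : ℝ))) * (Nat.factorial (2*m+2) : ℝ)
        = ((Nat.factorial (2*m+2) : ℝ) * I) * (((m:ℝ)+1) * (Nat.choose (2*m+2) (m+1) : ℝ)) := by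
          ring
      _ = ((Nat.factorial m : ℝ) * (Nat.factorial (m+1) : ℝ))
            * (((m:ℝ)+1) * (Nat.choose (2*m+2) (m+1) : ℝ)) := by rw [← hre]
      _ = (Nat.choose (2*m+2) (m+1) : ℝ) * (Nat.factorial (m+1) : ℝ)
            * ((((m:ℝ)+1)) * (Nat.factorial m : ℝ)) := by ring
      _ = (Nat.choose (2*m+2) (m+1) : ℝ) * (Nat.factorial (m+1) : ℝ)
            * (Nat.factorial (m+1) : ℝ) := by rw [← hfm1]
      _ = (Nat.factorial (2*m+2) : ℝ) := hc2
  have : I * (((m:ℝ)+1) * (Nat.choose (2*m+2) (m+1) : ℝ)) = 1 :=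
    mul_right_cancel₀ hfac (key.trans (one_mul _).symm)
  rw [eq_div_iff (by positivity)]
  push_cast
  linarith [this]


lemma sqrt5_gt_two : (2:ℝ) < Real.sqrt 5 := by
  nlinarith [Real.sq_sqrt (by norm_num : (5:ℝ) ≥ 0), Real.sqrt_nonneg 5]

lemma ftc_key : ∫ t in (0:ℝ)..1, (1 - t) / (1 + t - t^2)
    = 2 * Real.log ((1 + Real.sqrt 5) / 2) / Real.sqrt 5 := by
  set s := Real.sqrt 5 with hs_def
  have hs : s ^ 2 = 5 := Real.sq_sqrt (by norm_num)
  have hs2 : (2:ℝ) < s := sqrt5_gt_two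
  set F : ℝ → ℝ := fun t => (1/2) * Real.log (1 + t - t^2)
      + (1/(2*s)) * (Real.log (s + (2*t-1)) - Real.log (s - (2*t-1))) with hF_def
  have hderiv : ∀ t ∈ Icc (0:ℝ) 1, HasDerivAt F ((1 - t)/(1 + t - t^2)) t := by
    intro t ht
    obtain ⟨ht0, ht1⟩ := ht
    have hq : (0:ℝ) < 1 + t - t^2 := by nlinarith
    have ha : (0:ℝ) < s + (2*t-1) := by nlinarith
    have hb : (0:ℝ) < s - (2*t-1) := by nlinarith
    have d1 : HasDerivAt (fun t : ℝ => 1 + t - t^2) (1 - 2*t) t := by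
      have := ((hasDerivAt_id t).const_add 1).sub (hasDerivAt_pow 2 t)
      exact this.congr_deriv (by norm_num)
    have d2 : HasDerivAt (fun t : ℝ => s + (2*t-1)) 2 t := by
      have := (((hasDerivAt_id t).const_mul 2).sub_const 1).const_add s
      simpa using this
    have d3 : HasDerivAt (fun t : ℝ => s - (2*t-1)) (-2) t := by
      have := HasDerivAt.const_sub s (((hasDerivAt_id t).const_mul 2).sub_const 1)
      simpa using this
    have D : HasDerivAt F ((1/2) * ((1-2*t)/(1+t-t^2))
        + (1/(2*s)) * (2/(s+(2*t-1)) - (-2)/(s-(2*t-1)))) t := by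
      exact ((d1.log hq.ne').const_mul (1/2)).add
        (((d2.log ha.ne').sub (d3.log hb.ne')).const_mul (1/(2*s)))
    convert D using 1
    have hab : (s + (2*t-1)) * (s - (2*t-1)) = 4 * (1 + t - t^2) := by nlinarith
    have h2 : 2/(s + (2*t-1)) - (-2)/(s - (2*t-1)) = s/(1 + t - t^2) := by
      rw [div_sub_div _ _ ha.ne' hb.ne', div_eq_div_iff (by positivity) hq.ne']
      linear_combination s * hab - 2*s*hs
    rw [h2]
    have hsne : s ≠ 0 := by nlinarith
    field_simp
    ring
  have hcont : IntervalIntegrable (fun t : ℝ => (1 - t)/(1 + t - t^2)) volume 0 1 := by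
    apply ContinuousOn.intervalIntegrable
    apply ContinuousOn.div
    · fun_prop
    · fun_prop
    · intro t ht
      rw [uIcc_of_le (by norm_num : (0:ℝ) ≤ 1)] at ht
      nlinarith [ht.1, ht.2]
  have := intervalIntegral.integral_eq_sub_of_hasDerivAt
    (fun t ht => hderiv t (by rwa [uIcc_of_le (by norm_num : (0:ℝ) ≤ 1)] at ht)) hcont
  rw [this]
  have hlog : Real.log (s + 1) - Real.log (s - 1) = 2 * Real.log ((1 + s)/2) := by
    rw [← Real.log_div (by nlinarith) (by nlinarith)]
    have hs1 : s - 1 ≠ 0 := by nlinarith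
    rw [show (s+1)/(s-1) = ((1+s)/2)^2 by
      rw [div_eq_iff hs1]; linear_combination (-(s+1)/4) * hs]
    rw [Real.log_pow]
    push_cast; ring
  have hF1 : F 1 = (1/(2*s)) * (Real.log (s+1) - Real.log (s-1)) := by
    simp only [hF_def]
    norm_num
  have hF0 : F 0 = (1/(2*s)) * (Real.log (s-1) - Real.log (s+1)) := by
    simp only [hF_def]
    rw [show s + (2*(0:ℝ)-1) = s - 1 by ring, show s - (2*(0:ℝ)-1) = s + 1 by ring,
      show (1:ℝ) + 0 - 0^2 = 1 by norm_num, Real.log_one]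
    ring
  rw [hF1, hF0, ]
  have hsne : s ≠ 0 := by nlinarith
  field_simp
  linear_combination 2 * hlog


/-- ∑_{m=1}^∞ (-1)^{m-1} / (m · C(2m, m)) converges and equals 2·log((1+√5)/2)/√5. -/
theorem lehmer_corrected_p453a :
    HasSum (fun m : ℕ =>
      (-1 : ℝ) ^ m / ((m + 1 : ℝ) * (Nat.choose (2 * (m + 1)) (m + 1) : ℝ)))
      (2 * Real.log ((1 + Real.sqrt 5) / 2) / Real.sqrt 5) := by
  set G : ℕ → ℝ → ℝ := fun m t => (-1)^m * (t^m * (1-t)^(m+1)) with hG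
  set μ := volume.restrict (Ioc (0:ℝ) 1) with hμ
  have hGc : ∀ m, Continuous (G m) := by
    intro m; fun_prop
  have hint : ∀ m, Integrable (G m) μ := fun m => (hGc m).integrableOn_Ioc
  have hnorm : ∀ m, (∫ a, ‖G m a‖ ∂μ) ≤ (1/4:ℝ)^m := by
    intro m
    have hb : ∀ t ∈ Ioc (0:ℝ) 1, ‖G m t‖ ≤ (1/4:ℝ)^m := by
      intro t ht
      obtain ⟨ht0, ht1⟩ := ht
      have h0 : (0:ℝ) ≤ t := le_of_lt ht0
      have h1 : (0:ℝ) ≤ 1 - t := by linarith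
      have : ‖G m t‖ = t^m * (1-t)^(m+1) := by
        rw [hG]
        simp only [norm_mul, norm_pow, norm_neg, norm_one, one_pow, one_mul]
        rw [Real.norm_of_nonneg h0, Real.norm_of_nonneg h1]
      rw [this]
      have hq : t*(1-t) ≤ 1/4 := by nlinarith [sq_nonneg (t - 1/2)]
      calc t^m * (1-t)^(m+1) = (t*(1-t))^m * (1-t) := by rw [mul_pow]; ring
        _ ≤ (1/4:ℝ)^m * 1 := by
            apply mul_le_mul (pow_le_pow_left₀ (by positivity) hq m) (by linarith)
              (by positivity) (by positivity)
        _ = (1/4:ℝ)^m := mul_one _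
    calc (∫ a, ‖G m a‖ ∂μ) ≤ ∫ _ in Ioc (0:ℝ) 1, (1/4:ℝ)^m := by
          apply setIntegral_mono_on (hint m).norm (integrableOn_const (by simp))
            measurableSet_Ioc hb
      _ = (1/4:ℝ)^m := by simp
  have hsum : Summable fun m => ∫ a, ‖G m a‖ ∂μ :=
    Summable.of_nonneg_of_le (fun m => integral_nonneg fun a => norm_nonneg _) hnorm
      (summable_geometric_of_lt_one (by norm_num) (by norm_num))
  have H := MeasureTheory.hasSum_integral_of_summable_integral_norm hint hsum
  have e1 : (fun m => ∫ a, G m a ∂μ) = (fun m : ℕ =>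
      (-1 : ℝ) ^ m / ((m + 1 : ℝ) * (Nat.choose (2 * (m + 1)) (m + 1) : ℝ))) := by
    funext m
    have : (∫ a, G m a ∂μ) = ∫ t in (0:ℝ)..1, G m t := by
      rw [hμ, intervalIntegral.integral_of_le (by norm_num : (0:ℝ) ≤ 1)]
    rw [this, hG]
    rw [intervalIntegral.integral_const_mul, beta_key m]
    rw [mul_one_div]
  have e2 : (∫ a, (∑' m, G m a) ∂μ) = 2 * Real.log ((1 + Real.sqrt 5) / 2) / Real.sqrt 5 := by
    rw [hμ]
    have : ∀ t ∈ Ioc (0:ℝ) 1, (∑' m, G m t) = (1 - t)/(1 + t - t^2) := by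
      intro t ht
      obtain ⟨ht0, ht1⟩ := ht
      have h0 : (0:ℝ) ≤ t := le_of_lt ht0
      have h1 : (0:ℝ) ≤ 1 - t := by linarith
      have hr : ‖-(t*(1-t))‖ < 1 := by
        rw [Real.norm_eq_abs, abs_neg, abs_of_nonneg (by positivity)]
        nlinarith
      have hgeo := (hasSum_geometric_of_norm_lt_one hr).mul_right (1-t)
      have hfun : (fun m : ℕ => (-(t*(1-t)))^m * (1-t)) = fun m => G m t := by
        funext m
        rw [hG, show -(t*(1-t)) = (-1) * (t*(1-t)) by ring, mul_pow, mul_pow]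
        ring
      rw [hfun] at hgeo
      rw [hgeo.tsum_eq]
      rw [show (1 - -(t*(1-t))) = 1 + t - t^2 by ring]
      rw [inv_mul_eq_div]
    rw [setIntegral_congr_fun measurableSet_Ioc this]
    rw [← intervalIntegral.integral_of_le (by norm_num : (0:ℝ) ≤ 1)]
    exact ftc_key
  rw [e1, e2] at H
  exact H
end

section
/- The series ∑_{m=1}^∞ (-1)^{m-1} / (m² · C(2m, m)) converges and equals 2 · (log((√5 + 1)/2))². -/
open MeasureTheory intervalIntegral Real Set Filter Metric Topology

lemma beta_nat (n m : ℕ) :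
    ∫ t in (0:ℝ)..1, t ^ m * (1 - t) ^ n
      = (m.factorial * n.factorial : ℝ) / (m + n + 1).factorial := by
  induction n generalizing m with
  | zero =>
    simp only [pow_zero, mul_one, integral_pow, Nat.factorial, one_pow, Nat.add_zero]
    push_cast
    rw [eq_div_iff (by positivity)]
    norm_num
    rw [← mul_assoc, inv_mul_cancel₀ (by positivity : ((m:ℝ)+1) ≠ 0), one_mul]
  | succ n ih =>
    have hu : ∀ x ∈ uIcc (0:ℝ) 1, HasDerivAt (fun x : ℝ => (1 - x) ^ (n + 1))
        (-((n:ℝ) + 1) * (1 - x) ^ n) x := by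
      intro x _
      have h1 : HasDerivAt (fun x : ℝ => (1 - x)) (-1) x := by
        simpa using (hasDerivAt_id x).const_sub 1
      have := h1.pow (n + 1)
      refine this.congr_deriv ?_
      push_cast
      ring
    have hv : ∀ x ∈ uIcc (0:ℝ) 1, HasDerivAt (fun x : ℝ => x ^ (m + 1) / ((m:ℝ) + 1))
        (x ^ m) x := by
      intro x _
      have := (hasDerivAt_pow (m + 1) x).div_const ((m : ℝ) + 1)
      refine this.congr_deriv ?_
      push_cast
      field_simp
    have hIBP := intervalIntegral.integral_mul_deriv_eq_deriv_mul hu hv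
      (by apply Continuous.intervalIntegrable; continuity)
      (by apply Continuous.intervalIntegrable; continuity)
    have h2 : ∫ t in (0:ℝ)..1, t ^ m * (1 - t) ^ (n + 1)
        = ((n:ℝ) + 1) / ((m:ℝ) + 1) * ∫ t in (0:ℝ)..1, t ^ (m + 1) * (1 - t) ^ n := by
      have hcong : ∀ x : ℝ, -((n:ℝ) + 1) * (1 - x) ^ n * (x ^ (m + 1) / ((m:ℝ) + 1))
          = -(((n:ℝ) + 1) / ((m:ℝ) + 1) * (x ^ (m + 1) * (1 - x) ^ n)) := fun x => by ring
      have hcomm : ∀ x : ℝ, (1 - x) ^ (n+1) * (x ^ m) = x ^ m * (1 - x) ^ (n + 1) :=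
        fun x => by ring
      simp only [hcomm, hcong] at hIBP
      rw [hIBP, intervalIntegral.integral_neg, ← intervalIntegral.integral_const_mul]
      norm_num
    rw [h2, ih (m + 1)]
    have : (m + 1 + n + 1) = (m + (n + 1) + 1) := by omega
    rw [this, Nat.factorial_succ (n), Nat.factorial_succ (m)]
    push_cast
    have hK : ((m + (n + 1) + 1).factorial : ℝ) ≠ 0 := by positivity
    field_simp

lemma logSeries (t : ℝ) (ht : t ∈ Set.Ioc (0:ℝ) 1) :
    HasSum (fun m : ℕ => (-1:ℝ)^m * (t ^ m * (1 - t) ^ (m + 1)) / (m + 1))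
      (Real.log (1 + (t - t^2)) / t) := by
  obtain ⟨ht0, ht1⟩ := ht
  have habs : |t^2 - t| < 1 := by
    rw [abs_sub_lt_iff]
    constructor <;> nlinarith
  have h := (hasSum_pow_div_log_of_abs_lt_one habs).mul_left (-1/t)
  have h1 : (1 : ℝ) - (t^2 - t) = 1 + (t - t^2) := by ring
  rw [h1] at h
  have h2 : -1/t * -Real.log (1 + (t - t^2)) = Real.log (1 + (t - t^2)) / t := by
    field_simp
  rw [h2] at h
  convert h using 2 with n
  case e'_3 => exact rfl
  have ht0' : t ≠ 0 := ne_of_gt ht0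
  have : (t^2 - t)^(n+1) = (-1)^(n+1) * (t^(n+1) * (1-t)^(n+1)) := by
    rw [show t^2 - t = -1 * (t * (1-t)) by ring, mul_pow, mul_pow]
  rw [this, pow_succ]
  field_simp
  ring

lemma term_integrable (m : ℕ) :
    Integrable (fun t : ℝ => (-1:ℝ)^m * (t ^ m * (1 - t) ^ (m + 1)) / (m + 1))
      (volume.restrict (Set.Ioc (0:ℝ) 1)) := by
  apply Continuous.integrableOn_Ioc
  continuity

lemma norm_term_le (m : ℕ) (t : ℝ) (ht : t ∈ Set.Ioc (0:ℝ) 1) :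
    ‖(-1:ℝ)^m * (t ^ m * (1 - t) ^ (m + 1)) / (m + 1)‖ ≤ (1/4 : ℝ)^m := by
  obtain ⟨ht0, ht1⟩ := ht
  have h1 : 0 ≤ t := le_of_lt ht0
  have h2 : 0 ≤ 1 - t := by linarith
  rw [norm_div, norm_mul, norm_pow, norm_neg, norm_one, one_pow, one_mul]
  rw [norm_of_nonneg (by positivity), norm_of_nonneg (by positivity)]
  have key : t ^ m * (1 - t) ^ (m + 1) ≤ (1/4:ℝ)^m := by
    calc t ^ m * (1 - t) ^ (m + 1) = (t ^ m * (1-t)^m) * (1-t) := by rw [pow_succ]; ring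
      _ = (t * (1-t))^m * (1-t) := by rw [mul_pow]
      _ ≤ (1/4:ℝ)^m * 1 := by
          apply mul_le_mul _ (by linarith) h2 (by positivity)
          exact pow_le_pow_left₀ (by positivity) (by nlinarith [sq_nonneg (t - 1/2)]) m
      _ = (1/4:ℝ)^m := by ring
  calc t ^ m * (1 - t) ^ (m + 1) / ((m:ℝ) + 1) ≤ t ^ m * (1 - t) ^ (m + 1) :=
        div_le_self (by positivity) (by nlinarith [Nat.cast_nonneg (α := ℝ) m])
    _ ≤ (1/4:ℝ)^m := key

lemma swap_sum :
    HasSum (fun m : ℕ => ∫ t in Set.Ioc (0:ℝ) 1, (-1:ℝ)^m * (t ^ m * (1 - t) ^ (m + 1)) / (m + 1))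
      (∫ t in Set.Ioc (0:ℝ) 1, Real.log (1 + (t - t^2)) / t) := by
  have hnorm : ∀ m : ℕ, (∫ t in Set.Ioc (0:ℝ) 1,
      ‖(-1:ℝ)^m * (t ^ m * (1 - t) ^ (m + 1)) / (m + 1)‖) ≤ (1/4:ℝ)^m := by
    intro m
    calc (∫ t in Set.Ioc (0:ℝ) 1, ‖(-1:ℝ)^m * (t ^ m * (1 - t) ^ (m + 1)) / (m + 1)‖)
        ≤ ∫ t in Set.Ioc (0:ℝ) 1, (1/4:ℝ)^m := by
          apply setIntegral_mono_on (term_integrable m).norm (integrable_const _)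
            measurableSet_Ioc
          exact fun t ht => norm_term_le m t ht
      _ = (1/4:ℝ)^m := by simp
  have hsum : Summable (fun m : ℕ => ∫ t in Set.Ioc (0:ℝ) 1,
      ‖(-1:ℝ)^m * (t ^ m * (1 - t) ^ (m + 1)) / (m + 1)‖) := by
    apply Summable.of_nonneg_of_le (fun m => integral_nonneg (fun t => norm_nonneg _)) hnorm
    exact summable_geometric_of_lt_one (by norm_num) (by norm_num)
  have h := MeasureTheory.hasSum_integral_of_summable_integral_norm term_integrable hsum
  have hinteq : (∫ a in Set.Ioc (0:ℝ) 1, ∑' i:ℕ, (-1:ℝ)^i * (a ^ i * (1 - a) ^ (i + 1)) / (i + 1))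
      = ∫ t in Set.Ioc (0:ℝ) 1, Real.log (1 + (t - t^2)) / t := by
    apply setIntegral_congr_fun measurableSet_Ioc
    intro t ht
    exact (logSeries t ht).tsum_eq
  exact hinteq ▸ h

lemma termEq (m : ℕ) :
    (∫ t in Set.Ioc (0:ℝ) 1, (-1:ℝ)^m * (t ^ m * (1 - t) ^ (m + 1)) / (m + 1))
    = (-1:ℝ)^m / ((m + 1 : ℝ)^2 * (Nat.choose (2*(m+1)) (m+1) : ℝ)) := by
  rw [← intervalIntegral.integral_of_le zero_le_one]
  have hpt : ∀ t:ℝ, (-1:ℝ)^m * (t ^ m * (1 - t) ^ (m + 1)) / (m + 1)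
      = ((-1:ℝ)^m/((m:ℝ)+1)) * (t^m * (1-t)^(m+1)) := fun t => by ring
  simp only [hpt]
  rw [intervalIntegral.integral_const_mul, beta_nat (m+1) m]
  have hch' := Nat.choose_mul_factorial_mul_factorial (show m+1 ≤ 2*(m+1) by omega)
  rw [show 2*(m+1) - (m+1) = m+1 from by omega] at hch'
  have hch : (Nat.choose (2*(m+1)) (m+1) : ℝ) * (m+1).factorial * (m+1).factorial
      = ((2*(m+1)).factorial : ℝ) := by exact_mod_cast congrArg Nat.cast hch'
  rw [show m + (m+1) + 1 = 2*(m+1) from by omega]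
  have h2 : ((m+1).factorial : ℝ) = ((m:ℝ)+1) * m.factorial := by
    rw [Nat.factorial_succ]; push_cast; ring
  have hne1 : ((m:ℝ)+1) ≠ 0 := by positivity
  have hne2 : ((2*(m+1)).factorial : ℝ) ≠ 0 := by positivity
  have hne3 : (m.factorial : ℝ) ≠ 0 := by positivity
  have hne4 : (Nat.choose (2*(m+1)) (m+1) : ℝ) ≠ 0 := by
    have := Nat.choose_pos (show m+1 ≤ 2*(m+1) by omega)
    positivity
  rw [h2] at hch
  rw [h2]
  field_simp
  linear_combination hch

lemma K_hasDeriv {a : ℝ} (ha : a ∈ Set.Icc (0:ℝ) 1) :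
    HasDerivAt (fun x => ∫ t in (0:ℝ)..1, Real.log (1 + x*(t - t^2)) / t)
      (∫ t in (0:ℝ)..1, (1 - t)/(1 + a*(t - t^2))) a := by
  obtain ⟨ha0, ha1⟩ := ha
  -- basic facts about t in the unit interval
  have hu : ∀ t : ℝ, t ∈ Set.uIoc (0:ℝ) 1 → (0 < t ∧ t ≤ 1 ∧ 0 ≤ t - t^2 ∧ t - t^2 ≤ 1/4) := by
    intro t ht
    rw [Set.uIoc_of_le zero_le_one] at ht
    obtain ⟨h1, h2⟩ := ht
    exact ⟨h1, h2, by nlinarith, by nlinarith [sq_nonneg (t - 1/2)]⟩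
  have hden : ∀ x : ℝ, x ∈ ball a (1/4) → ∀ t : ℝ, t ∈ Set.uIoc (0:ℝ) 1 →
      (1:ℝ)/2 ≤ 1 + x*(t - t^2) := by
    intro x hx t ht
    obtain ⟨h1, h2, h3, h4⟩ := hu t ht
    rw [mem_ball, Real.dist_eq, abs_sub_lt_iff] at hx
    nlinarith
  have hF'_deriv : ∀ t : ℝ, t ∈ Set.uIoc (0:ℝ) 1 → ∀ x ∈ ball a (1/4),
      HasDerivAt (fun x => Real.log (1 + x*(t - t^2)) / t)
        ((1 - t)/(1 + x*(t - t^2)) ) x := by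
    intro t ht x hx
    obtain ⟨h1, h2, h3, h4⟩ := hu t ht
    have hpos : 0 < 1 + x*(t - t^2) := lt_of_lt_of_le (by norm_num) (hden x hx t ht)
    have hinner : HasDerivAt (fun x : ℝ => 1 + x*(t - t^2)) (t - t^2) x := by
      simpa using ((hasDerivAt_id x).mul_const (t - t^2)).const_add 1
    have hlog := (Real.hasDerivAt_log (ne_of_gt hpos)).comp x hinner
    have := hlog.div_const t
    refine this.congr_deriv ?_
    field_simp
  have hmeasF : ∀ x : ℝ, Measurable fun t:ℝ => Real.log (1 + x*(t - t^2)) / t := by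
    intro x
    have h1 : Measurable fun t:ℝ => 1 + x*(t - t^2) :=
      ((measurable_id.sub (measurable_id.pow_const 2)).const_mul x).const_add 1
    exact (Real.measurable_log.comp h1).div measurable_id
  have hmeasF' : Measurable fun t:ℝ => (1 - t)/(1 + a*(t - t^2)) := by
    have h1 : Measurable fun t:ℝ => 1 + a*(t - t^2) :=
      ((measurable_id.sub (measurable_id.pow_const 2)).const_mul a).const_add 1
    exact (measurable_const.sub measurable_id).div h1
  apply
    (intervalIntegral.hasDerivAt_integral_of_dominated_loc_of_deriv_le
      (F := fun x t => Real.log (1 + x*(t - t^2)) / t)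
      (F' := fun x t => (1 - t)/(1 + x*(t - t^2)))
      (bound := fun _ => (2:ℝ))
      (ball_mem_nhds a (by norm_num : (0:ℝ) < 1/4))
      ?_ ?_ ?_ ?_ ?_ ?_).2
  · -- measurability of F x for x near a
    filter_upwards with x
    exact (hmeasF x).aestronglyMeasurable
  · -- integrability of F a
    rw [intervalIntegrable_iff_integrableOn_Ioc_of_le zero_le_one]
    apply Integrable.mono'
      ((integrableOn_const_iff).mpr (Or.inr measure_Ioc_lt_top) :
        IntegrableOn (fun _:ℝ => (1:ℝ)) (Set.Ioc (0:ℝ) 1) volume)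
      (hmeasF a).aestronglyMeasurable.restrict
    rw [ae_restrict_iff' measurableSet_Ioc]
    filter_upwards with t ht'
    have ht : t ∈ Set.uIoc (0:ℝ) 1 := by rw [Set.uIoc_of_le zero_le_one]; exact ht'
    obtain ⟨h1, h2, h3, h4⟩ := hu t ht
    have hl0 : 0 ≤ Real.log (1 + a*(t - t^2)) := Real.log_nonneg (by nlinarith)
    have hl1 : Real.log (1 + a*(t - t^2)) ≤ a*(t - t^2) := by
      have := Real.log_le_sub_one_of_pos (show (0:ℝ) < 1 + a*(t-t^2) by nlinarith)
      linarith
    rw [Real.norm_eq_abs, abs_div, abs_of_nonneg hl0, abs_of_pos h1]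
    rw [div_le_one h1]
    nlinarith
  · -- measurability of F' a
    exact hmeasF'.aestronglyMeasurable
  · -- bound on F'
    filter_upwards with t ht x hx
    have h12 := hden x hx t ht
    obtain ⟨h1, h2, h3, h4⟩ := hu t ht
    rw [Real.norm_eq_abs, abs_div, abs_of_nonneg (by linarith : (0:ℝ) ≤ 1 - t),
      abs_of_pos (by linarith : (0:ℝ) < 1 + x*(t - t^2))]
    calc (1 - t)/(1 + x*(t - t^2)) ≤ 1/(1/2) := by
          apply div_le_div₀ (by norm_num) (by linarith) (by norm_num) h12
      _ = 2 := by norm_num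
  · exact intervalIntegrable_const
  · filter_upwards with t ht x hx
    exact hF'_deriv t ht x hx

lemma d_facts {a : ℝ} (ha0 : 0 < a) :
    0 < Real.sqrt (a*(a+4)) ∧ (Real.sqrt (a*(a+4)))^2 = a*(a+4) ∧ a < Real.sqrt (a*(a+4)) := by
  set d := Real.sqrt (a*(a+4)) with hd
  have hdpos : 0 < d := Real.sqrt_pos.mpr (by nlinarith)
  have hd2 : d^2 = a*(a+4) := Real.sq_sqrt (by nlinarith)
  refine ⟨hdpos, hd2, ?_⟩
  nlinarith [hd2, hdpos]

lemma D_eval {a : ℝ} (ha0 : 0 < a) (ha1 : a ≤ 1) :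
    ∫ t in (0:ℝ)..1, (1 - t)/(1 + a*(t - t^2))
      = (Real.log (Real.sqrt (a*(a+4)) + a) - Real.log (Real.sqrt (a*(a+4)) - a))
        / Real.sqrt (a*(a+4)) := by
  obtain ⟨hdpos, hd2, had⟩ := d_facts ha0
  set d := Real.sqrt (a*(a+4)) with hd
  set G : ℝ → ℝ := fun t => (1/(2*d)) * (Real.log (d + a*(2*t-1)) - Real.log (d - a*(2*t-1)))
      + (1/(2*a)) * Real.log (1 + a*(t - t^2)) with hG
  have hderiv : ∀ t ∈ uIcc (0:ℝ) 1, HasDerivAt G ((1 - t)/(1 + a*(t - t^2))) t := by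
    intro t htt
    rw [uIcc_of_le zero_le_one] at htt
    obtain ⟨ht0, ht1⟩ := htt
    have habs : |a*(2*t-1)| ≤ a := by
      rw [abs_mul, abs_of_pos ha0]
      nlinarith [abs_le.mpr (⟨by linarith, by linarith⟩ : -1 ≤ 2*t-1 ∧ 2*t-1 ≤ 1)]
    have hP : 0 < d + a*(2*t-1) := by
      have := neg_abs_le (a*(2*t-1)); linarith
    have hQ : 0 < d - a*(2*t-1) := by
      have := le_abs_self (a*(2*t-1)); linarith
    have hR : 0 < 1 + a*(t - t^2) := by nlinarith
    have h1 : HasDerivAt (fun t : ℝ => d + a*(2*t-1)) (2*a) t := by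
      have := ((((hasDerivAt_id t).const_mul (2:ℝ)).sub_const 1).const_mul a).const_add d
      refine this.congr_deriv ?_; ring
    have h2 : HasDerivAt (fun t : ℝ => d - a*(2*t-1)) (-(2*a)) t := by
      have := (((((hasDerivAt_id t).const_mul (2:ℝ)).sub_const 1).const_mul a)).const_sub d
      refine this.congr_deriv ?_; ring
    have h3 : HasDerivAt (fun t : ℝ => 1 + a*(t - t^2)) (a*(1 - 2*t)) t := by
      have := (((hasDerivAt_id t).sub ((hasDerivAt_pow 2 t))).const_mul a).const_add 1
      refine this.congr_deriv ?_
      push_cast; ring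
    have hL1 := (Real.hasDerivAt_log (ne_of_gt hP)).comp t h1
    have hL2 := (Real.hasDerivAt_log (ne_of_gt hQ)).comp t h2
    have hL3 := (Real.hasDerivAt_log (ne_of_gt hR)).comp t h3
    have := ((hL1.sub hL2).const_mul (1/(2*d))).add (hL3.const_mul (1/(2*a)))
    refine this.congr_deriv ?_
    have hfact : (d + a*(2*t-1))*(d - a*(2*t-1)) = 4*a*(1 + a*(t - t^2)) := by
      have h' : (d + a*(2*t-1))*(d - a*(2*t-1)) = d^2 - (a*(2*t-1))^2 := by ring
      rw [h', hd2]; ring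
    have key : (d + a*(2*t-1))⁻¹*(2*a) - (d - a*(2*t-1))⁻¹*(-(2*a))
        = 2*a*((d + a*(2*t-1)) + (d - a*(2*t-1)))/((d + a*(2*t-1))*(d - a*(2*t-1))) := by
      field_simp
      ring
    rw [key, hfact, show (d + a*(2*t-1)) + (d - a*(2*t-1)) = 2*d by ring]
    field_simp
    ring
  have hint : IntervalIntegrable (fun t : ℝ => (1 - t)/(1 + a*(t - t^2))) volume 0 1 := by
    apply ContinuousOn.intervalIntegrable
    apply ContinuousOn.div
    · fun_prop
    · fun_prop
    · intro t htt
      rw [uIcc_of_le zero_le_one] at htt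
      obtain ⟨ht0, ht1⟩ := htt
      nlinarith
  rw [intervalIntegral.integral_eq_sub_of_hasDerivAt hderiv hint]
  have e1 : a*(2*(1:ℝ)-1) = a := by ring
  have e0 : a*(2*(0:ℝ)-1) = -a := by ring
  simp only [hG, e1, e0]
  rw [show (1:ℝ) + a*(1 - 1^2) = 1 by ring, show (1:ℝ) + a*(0 - 0^2) = 1 by ring, Real.log_one]
  rw [show d + -a = d - a by ring, show d - -a = d + a by ring]
  field_simp
  ring

lemma sqrt_aux {a : ℝ} (ha0 : 0 < a) :
    Real.sqrt (1 + (Real.sqrt a / 2)^2) = Real.sqrt (a+4) / 2 ∧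
    Real.sqrt a * Real.sqrt (a+4) = Real.sqrt (a*(a+4)) := by
  constructor
  · rw [div_pow, Real.sq_sqrt ha0.le, show (1:ℝ) + a/2^2 = (a+4)/2^2 by ring,
      Real.sqrt_div' , Real.sqrt_sq] <;> norm_num
  · rw [← Real.sqrt_mul ha0.le]

lemma Phi_hasDeriv {a : ℝ} (ha0 : 0 < a) :
    HasDerivAt (fun x => 2 * (Real.arsinh (Real.sqrt x / 2))^2)
      (2 * Real.arsinh (Real.sqrt a / 2) / Real.sqrt (a*(a+4))) a := by
  obtain ⟨hs1, hs2⟩ := sqrt_aux ha0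
  have hsa : 0 < Real.sqrt a := Real.sqrt_pos.mpr ha0
  have hs4 : 0 < Real.sqrt (a+4) := Real.sqrt_pos.mpr (by linarith)
  have hg : HasDerivAt (fun x : ℝ => Real.sqrt x / 2) (1 / (2 * Real.sqrt a) / 2) a :=
    (Real.hasDerivAt_sqrt (ne_of_gt ha0)).div_const 2
  have hA := (Real.hasDerivAt_arsinh (Real.sqrt a / 2)).comp a hg
  have hsq := (hA.pow 2).const_mul (2:ℝ)
  refine hsq.congr_deriv ?_
  rw [hs1, ← hs2]
  have : ((Real.sqrt (a+4) / 2)⁻¹) = 2 / Real.sqrt (a+4) := by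
    rw [inv_div]
  rw [this]
  field_simp
  ring
  rfl

lemma log_ident {a : ℝ} (ha0 : 0 < a) :
    Real.log (Real.sqrt (a*(a+4)) + a) - Real.log (Real.sqrt (a*(a+4)) - a)
      = 2 * Real.arsinh (Real.sqrt a / 2) := by
  obtain ⟨hs1, hs2⟩ := sqrt_aux ha0
  have hsa : 0 < Real.sqrt a := Real.sqrt_pos.mpr ha0
  have hs4 : 0 < Real.sqrt (a+4) := Real.sqrt_pos.mpr (by linarith)
  set d := Real.sqrt (a*(a+4)) with hd
  have hdpos : 0 < d := Real.sqrt_pos.mpr (by nlinarith)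
  have hd2 : d^2 = a*(a+4) := Real.sq_sqrt (by nlinarith)
  have had : a < d := by nlinarith
  have harsinh : Real.arsinh (Real.sqrt a / 2)
      = Real.log ((Real.sqrt a + Real.sqrt (a+4)) / 2) := by
    rw [Real.arsinh, hs1]
    congr 1
    ring
  rw [harsinh, show (2:ℝ) * Real.log ((Real.sqrt a + Real.sqrt (a+4)) / 2)
      = Real.log (((Real.sqrt a + Real.sqrt (a+4)) / 2)^2) by
        rw [Real.log_pow]; push_cast; ring]
  rw [← Real.log_div (by positivity) (ne_of_gt (by linarith : (0:ℝ) < d - a))]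
  congr 1
  have hy2 : ((Real.sqrt a + Real.sqrt (a+4)) / 2)^2 = (2 + a + d)/2 := by
    have e1 : (Real.sqrt a)^2 = a := Real.sq_sqrt ha0.le
    have e2 : (Real.sqrt (a+4))^2 = a + 4 := Real.sq_sqrt (by linarith)
    field_simp
    nlinarith [hs2]
  rw [hy2]
  rw [div_eq_div_iff (by linarith : (d - a) ≠ 0) (by norm_num : (2:ℝ) ≠ 0)]
  nlinarith [hd2]

lemma K_one :
    (∫ t in (0:ℝ)..1, Real.log (1 + 1*(t - t^2)) / t) = 2 * (Real.arsinh (1/2))^2 := by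
  set K : ℝ → ℝ := fun x => ∫ t in (0:ℝ)..1, Real.log (1 + x*(t - t^2)) / t with hK
  set Φ : ℝ → ℝ := fun x => 2 * (Real.arsinh (Real.sqrt x / 2))^2 with hΦ
  have hΦcont : Continuous Φ :=
    continuous_const.mul ((Real.continuous_arsinh.comp (Real.continuous_sqrt.div_const 2)).pow 2)
  have hKcont : ContinuousOn K (Set.Icc 0 1) := fun x hx =>
    (K_hasDeriv hx).continuousAt.continuousWithinAt
  have hzero : K 0 - Φ 0 = 0 := by
    simp [hK, hΦ]
  have hconst : ∀ c ∈ Set.Ioc (0:ℝ) 1, K 1 - Φ 1 = K c - Φ c := by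
    intro c hc
    have key := constant_of_has_deriv_right_zero
      (f := fun x => K x - Φ x) (a := c) (b := 1)
      (ContinuousOn.sub (hKcont.mono (Icc_subset_Icc hc.1.le le_rfl)) hΦcont.continuousOn)
      ?_ 1 (right_mem_Icc.mpr hc.2)
    · exact key
    · intro x hx
      have hx0 : 0 < x := lt_of_lt_of_le hc.1 hx.1
      have hx1 : x ≤ 1 := hx.2.le
      have h1 := K_hasDeriv (Set.mem_Icc.mpr ⟨hx0.le, hx1⟩)
      rw [D_eval hx0 hx1, log_ident hx0] at h1
      have h2 := Phi_hasDeriv hx0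
      have h3 := h1.sub h2
      rw [sub_self] at h3
      exact h3.hasDerivWithinAt
  have htend1 : Tendsto (fun c => K c - Φ c) (𝓝[Set.Ioc (0:ℝ) 1] 0) (𝓝 (K 0 - Φ 0)) := by
    have : ContinuousWithinAt (fun c => K c - Φ c) (Set.Ioc (0:ℝ) 1) 0 :=
      (((K_hasDeriv (Set.mem_Icc.mpr ⟨le_rfl, zero_le_one⟩)).continuousAt).sub
        hΦcont.continuousAt).continuousWithinAt
    exact this
  have htend2 : Tendsto (fun c => K c - Φ c) (𝓝[Set.Ioc (0:ℝ) 1] 0) (𝓝 (K 1 - Φ 1)) := by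
    apply Tendsto.congr' _ tendsto_const_nhds
    filter_upwards [self_mem_nhdsWithin] with c hc
    exact hconst c hc
  haveI : (𝓝[Set.Ioc (0:ℝ) 1] (0:ℝ)).NeBot := left_nhdsWithin_Ioc_neBot zero_lt_one
  have := tendsto_nhds_unique htend2 htend1
  rw [hzero] at this
  have hfin : K 1 = Φ 1 := by linarith [sub_eq_zero.mp this]
  have : Φ 1 = 2 * (Real.arsinh (1/2))^2 := by
    rw [hΦ]
    simp [Real.sqrt_one]
  rw [← this, ← hfin]

/-- ∑_{m=1}^∞ (-1)^{m-1} / (m² · C(2m, m)) converges and equals 2·(log((√5+1)/2))². -/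
theorem lehmer_corrected_p453b :
    HasSum (fun m : ℕ =>
      (-1 : ℝ) ^ m / ((m + 1 : ℝ) ^ 2 * (Nat.choose (2 * (m + 1)) (m + 1) : ℝ)))
      (2 * (Real.log ((Real.sqrt 5 + 1) / 2)) ^ 2) := by
  have h := swap_sum
  have hfun : (fun m : ℕ => ∫ t in Set.Ioc (0:ℝ) 1,
      (-1:ℝ)^m * (t ^ m * (1 - t) ^ (m + 1)) / (m + 1))
      = (fun m : ℕ => (-1 : ℝ) ^ m / ((m + 1 : ℝ) ^ 2 * (Nat.choose (2 * (m + 1)) (m + 1) : ℝ))) :=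
    funext termEq
  rw [hfun] at h
  have hval : (∫ t in Set.Ioc (0:ℝ) 1, Real.log (1 + (t - t^2)) / t)
      = 2 * (Real.log ((Real.sqrt 5 + 1) / 2)) ^ 2 := by
    rw [← intervalIntegral.integral_of_le zero_le_one]
    have hone : (∫ t in (0:ℝ)..1, Real.log (1 + (t - t^2)) / t)
        = ∫ t in (0:ℝ)..1, Real.log (1 + 1*(t - t^2)) / t := by
      simp only [one_mul]
    rw [hone, K_one]
    have harsinh : Real.arsinh (1/2 : ℝ) = Real.log ((Real.sqrt 5 + 1) / 2) := by
      rw [Real.arsinh]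
      congr 1
      rw [show (1:ℝ) + (1/2)^2 = (Real.sqrt 5 / 2)^2 by
          have h5 : Real.sqrt 5 ^ 2 = (5:ℝ) := Real.sq_sqrt (by norm_num)
          nlinarith [h5],
        Real.sqrt_sq (by positivity)]
      ring
    rw [harsinh]
  rw [← hval]
  exact h
end

section
/- Let τ = (√3 − 1)/2. The series ∑_{m=1}^∞ 2^m · (2 − √3)^m / (m² · C(2m, m)) converges and equals 2 · (arcsin τ)². -/
open Real MeasureTheory intervalIntegral


lemma wallis_odd (k : ℕ) :
    ∫ θ in (0:ℝ)..(π/2), Real.sin θ ^ (2*k+1)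
      = 2^(2*k) / ((2*k+1) * ((2*k).choose k : ℝ)) := by
  induction k with
  | zero => simp [integral_sin]
  | succ n ih =>
    have h2 : 2*(n+1)+1 = (2*n+1) + 2 := by ring
    have hrec := @integral_sin_pow 0 (π/2) (2*n+1)
    rw [Real.sin_zero, Real.cos_pi_div_two] at hrec
    rw [h2, hrec, ih]
    have hC : ((n:ℝ)+1) * ((2*(n+1)).choose (n+1) : ℝ) = 2 * (2*n+1) * ((2*n).choose n : ℝ) := by
      have := Nat.succ_mul_centralBinom_succ n
      simp only [Nat.centralBinom] at this
      exact_mod_cast this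
    have hCpos : (0:ℝ) < ((2*n).choose n : ℝ) := by
      exact_mod_cast Nat.choose_pos (by omega)
    have hCpos' : (0:ℝ) < ((2*(n+1)).choose (n+1) : ℝ) := by
      exact_mod_cast Nat.choose_pos (by omega)
    have h4 : (2:ℝ)^(2*(n+1)) = 4 * 2^(2*n) := by
      rw [show 2*(n+1) = 2*n+2 from by ring, pow_add]; ring
    push_cast
    field_simp
    push_cast at hC
    rw [h4]
    linear_combination (2 * (2:ℝ)^(2*n) * (2*(n:ℝ)+3)) * hC


lemma denom_pos {t : ℝ} (h1 : t < 1) (h0 : 0 ≤ t) (θ : ℝ) :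
    0 < 1 - t^2 * Real.sin θ ^ 2 := by
  nlinarith [Real.sin_sq_le_one θ, sq_nonneg t]

lemma inner_integral {t : ℝ} (h0 : 0 ≤ t) (h1 : t < 1) :
    ∫ θ in (0:ℝ)..(π/2), t * Real.sin θ / (1 - t^2 * Real.sin θ ^ 2)
      = Real.arcsin t / Real.sqrt (1 - t^2) := by
  have ht2 : (0:ℝ) < 1 - t^2 := by nlinarith
  set c := Real.sqrt (1 - t^2) with hcdef
  have hc : 0 < c := Real.sqrt_pos.mpr ht2
  have hc2 : c^2 = 1 - t^2 := Real.sq_sqrt ht2.le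
  have hderiv : ∀ θ ∈ Set.uIcc (0:ℝ) (π/2),
      HasDerivAt (fun θ => -(Real.arctan (t * Real.cos θ / c) / c))
        (t * Real.sin θ / (1 - t^2 * Real.sin θ ^ 2)) θ := by
    intro θ _
    have hg : HasDerivAt (fun θ => t * Real.cos θ / c) (t * (-Real.sin θ) / c) θ :=
      ((Real.hasDerivAt_cos θ).const_mul t).div_const c
    have ha := (Real.hasDerivAt_arctan (t * Real.cos θ / c)).comp θ hg
    have := (ha.div_const c).neg
    refine this.congr_deriv ?_
    symm
    have hd := denom_pos h1 h0 θ
    have hcos : Real.cos θ ^ 2 = 1 - Real.sin θ ^ 2 := Real.cos_sq' θ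
    field_simp
    linear_combination (t * Real.sin θ) * hc2 + (t * Real.sin θ * t^2) * hcos
  have hint : IntervalIntegrable (fun θ => t * Real.sin θ / (1 - t^2 * Real.sin θ ^ 2))
      MeasureTheory.volume 0 (π/2) := by
    apply Continuous.intervalIntegrable
    exact (continuous_const.mul Real.continuous_sin).div
      (continuous_const.sub (continuous_const.mul (Real.continuous_sin.pow 2)))
      (fun θ => (denom_pos h1 h0 θ).ne')
  rw [integral_eq_sub_of_hasDerivAt hderiv hint]
  rw [Real.cos_pi_div_two, Real.cos_zero]
  rw [Real.arcsin_eq_arctan ⟨by linarith, h1⟩]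
  simp [hc.ne', hcdef]


lemma hasSum_coeff {t : ℝ} (h0 : 0 ≤ t) (h1 : t < 1) :
    HasSum (fun k : ℕ => t^(2*k+1) * (2^(2*k) / ((2*k+1) * ((2*k).choose k : ℝ))))
      (Real.arcsin t / Real.sqrt (1 - t^2)) := by
  have key : HasSum (fun k : ℕ => ∫ θ in (0:ℝ)..(π/2), (t * Real.sin θ)^(2*k+1))
      (∫ θ in (0:ℝ)..(π/2), t * Real.sin θ / (1 - t^2 * Real.sin θ ^ 2)) := by
    apply intervalIntegral.hasSum_integral_of_dominated_convergence
      (bound := fun (k : ℕ) (_ : ℝ) => t^(2*k+1))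
    · intro k
      exact ((continuous_const.mul Real.continuous_sin).pow _).aestronglyMeasurable
    · intro k
      filter_upwards with θ _
      rw [norm_pow, Real.norm_eq_abs, abs_mul, abs_of_nonneg h0]
      refine pow_le_pow_left₀ (by positivity) ?_ _
      nlinarith [abs_sin_le_one θ, abs_nonneg (Real.sin θ)]
    · filter_upwards with θ _
      have : Summable (fun k : ℕ => t * (t^2)^k) :=
        (summable_geometric_of_lt_one (by positivity) (by nlinarith)).mul_left t
      refine this.congr fun k => ?_
      rw [← pow_mul]; ring
    · exact intervalIntegrable_const
    · filter_upwards with θ _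
      have hr0 : (0:ℝ) ≤ (t * Real.sin θ)^2 := sq_nonneg _
      have hr1 : (t * Real.sin θ)^2 < 1 := by
        have := denom_pos h1 h0 θ; nlinarith
      have := (hasSum_geometric_of_lt_one hr0 hr1).mul_left (t * Real.sin θ)
      have h2 : (fun k : ℕ => t * Real.sin θ * ((t * Real.sin θ)^2)^k)
          = fun k : ℕ => (t * Real.sin θ)^(2*k+1) := by
        funext k; rw [← pow_mul]; ring
      rw [h2] at this
      refine (congrArg (HasSum _) ?_).mp this
      rw [div_eq_mul_inv, mul_pow]
  rw [inner_integral h0 h1] at key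
  have h3 : (fun k : ℕ => ∫ θ in (0:ℝ)..(π/2), (t * Real.sin θ)^(2*k+1))
      = fun k : ℕ => t^(2*k+1) * (2^(2*k) / ((2*k+1) * ((2*k).choose k : ℝ))) := by
    funext k
    simp_rw [mul_pow]
    rw [intervalIntegral.integral_const_mul, wallis_odd k]
  rwa [h3] at key


lemma lehmer_general (a : ℝ) (ha0 : 0 < a) (ha1 : a < 1)
    (ha2 : 2 - Real.sqrt 3 = 2 * a^2) (h4a2 : 4 * a^2 < 1) :
    HasSum (fun m : ℕ =>
      2 ^ (m + 1) * (2 - Real.sqrt 3) ^ (m + 1) /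
        ((m + 1 : ℝ) ^ 2 * (Nat.choose (2 * (m + 1)) (m + 1) : ℝ)))
      (2 * Real.arcsin a ^ 2) := by
  set c : ℕ → ℝ := fun k => 2^(2*k) / ((2*k+1) * ((2*k).choose k : ℝ)) with hc
  have hcnonneg : ∀ k, 0 ≤ c k := by
    intro k
    have : (0:ℝ) < ((2*k).choose k : ℝ) := by exact_mod_cast Nat.choose_pos (by omega)
    positivity
  have hcle : ∀ k, c k ≤ 2^(2*k) := by
    intro k
    have h1 : (1:ℝ) ≤ ((2*k).choose k : ℝ) := by exact_mod_cast Nat.choose_pos (by omega)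
    rw [hc]
    calc 2^(2*k) / ((2*k+1) * ((2*k).choose k : ℝ)) ≤ 2^(2*k) / 1 := by
          apply div_le_div_of_nonneg_left (by positivity) (by norm_num)
          nlinarith [h1]
      _ = 2^(2*k) := by norm_num
  -- swap sum and integral over t ∈ [0, a]
  have key : HasSum (fun k : ℕ => ∫ t in (0:ℝ)..a, 4 * (t^(2*k+1) * c k))
      (∫ t in (0:ℝ)..a, 4 * (Real.arcsin t / Real.sqrt (1 - t^2))) := by
    apply intervalIntegral.hasSum_integral_of_dominated_convergence
      (bound := fun (k : ℕ) (_ : ℝ) => 4 * (a^(2*k+1) * c k))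
    · intro k
      exact (continuous_const.mul ((continuous_pow _).mul continuous_const)).aestronglyMeasurable
    · intro k
      filter_upwards with t ht
      rw [Set.uIoc_of_le ha0.le] at ht
      have h0k : (0:ℝ) ≤ c k := hcnonneg k
      rw [Real.norm_eq_abs, abs_mul, abs_mul, abs_of_nonneg (by norm_num : (0:ℝ) ≤ 4),
        abs_of_nonneg h0k, abs_pow]
      have : |t| ^ (2*k+1) ≤ a ^ (2*k+1) := by
        apply pow_le_pow_left₀ (abs_nonneg t)
        rw [abs_of_nonneg ht.1.le]; exact ht.2
      nlinarith [this, h0k]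
    · filter_upwards with t _
      apply Summable.of_nonneg_of_le (fun k => by positivity)
        (fun k => ?_) ((summable_geometric_of_lt_one (by positivity) h4a2).mul_left (4*a))
      have : 4 * (a^(2*k+1) * c k) ≤ 4 * (a^(2*k+1) * 2^(2*k)) := by
        have := hcle k
        have h0 : (0:ℝ) ≤ a^(2*k+1) := by positivity
        nlinarith [hcle k, h0]
      calc 4 * (a^(2*k+1) * c k) ≤ 4 * (a^(2*k+1) * 2^(2*k)) := this
        _ = 4 * a * (4*a^2)^k := by
            rw [show (4:ℝ)*a^2 = 2^2*a^2 from by norm_num, mul_pow, pow_succ, pow_mul, pow_mul]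
            ring
    · exact intervalIntegrable_const
    · filter_upwards with t ht
      have ht' : t ∈ Set.Ioc 0 a := by rwa [Set.uIoc_of_le ha0.le] at ht
      exact (hasSum_coeff ht'.1.le (ht'.2.trans_lt ha1)).mul_left 4
  -- evaluate each term integral
  have hterm : ∀ k : ℕ, (∫ t in (0:ℝ)..a, 4 * (t^(2*k+1) * c k))
      = 2 ^ (k + 1) * (2 - Real.sqrt 3) ^ (k + 1) /
        ((k + 1 : ℝ) ^ 2 * (Nat.choose (2 * (k + 1)) (k + 1) : ℝ)) := by
    intro k
    have : (fun t : ℝ => 4 * (t^(2*k+1) * c k)) = fun t : ℝ => (4 * c k) * t^(2*k+1) := by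
      funext t; ring
    rw [this, intervalIntegral.integral_const_mul, integral_pow]
    have hCC : ((k:ℝ)+1) * ((2*(k+1)).choose (k+1) : ℝ) = 2 * (2*k+1) * ((2*k).choose k : ℝ) := by
      have := Nat.succ_mul_centralBinom_succ k
      simp only [Nat.centralBinom] at this
      exact_mod_cast this
    have hCpos : (0:ℝ) < ((2*k).choose k : ℝ) := by exact_mod_cast Nat.choose_pos (by omega)
    have hCpos' : (0:ℝ) < ((2*(k+1)).choose (k+1) : ℝ) := by exact_mod_cast Nat.choose_pos (by omega)
    have e1 : (2:ℝ) ^ (k + 1) * (2 - Real.sqrt 3) ^ (k + 1) = 4 * 2^(2*k) * a^(2*k+1+1) := by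
      rw [ha2, ← mul_pow, show (2:ℝ)*(2*a^2) = 4*a^2 from by ring, mul_pow,
        show (4:ℝ)^(k+1) = 4*2^(2*k) from by
          rw [show (4:ℝ) = 2^2 from by norm_num, ← pow_mul,
            show 2*(k+1) = 2+2*k from by ring, pow_add],
        show (a^2)^(k+1) = a^(2*k+1+1) from by rw [← pow_mul, show 2*(k+1) = 2*k+1+1 from by omega]]
    rw [e1, hc]
    rw [zero_pow (by omega : 2*k+1+1 ≠ 0), sub_zero]
    push_cast
    field_simp
    push_cast at hCC
    set C1 : ℝ := ((2*k).choose k : ℝ)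
    set C2 : ℝ := ((2*(k+1)).choose (k+1) : ℝ)
    linear_combination ((k:ℝ)+1) * hCC
  -- evaluate the integral of the sum
  have hint : (∫ t in (0:ℝ)..a, 4 * (Real.arcsin t / Real.sqrt (1 - t^2)))
      = 2 * Real.arcsin a ^ 2 := by
    rw [intervalIntegral.integral_eq_sub_of_hasDerivAt
      (f := fun t => 2 * Real.arcsin t ^ 2) ?_ ?_]
    · simp
    · intro t htm
      rw [Set.uIcc_of_le ha0.le] at htm
      have ht1 : t ≠ -1 := by intro h; rw [h] at htm; linarith [htm.1]
      have ht2 : t ≠ 1 := by intro h; rw [h] at htm; linarith [htm.2, ha1]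
      have := ((Real.hasDerivAt_arcsin ht1 ht2).pow 2).const_mul 2
      refine this.congr_deriv ?_
      symm
      ring
    · apply ContinuousOn.intervalIntegrable
      rw [Set.uIcc_of_le ha0.le]
      apply ContinuousOn.mul continuousOn_const
      apply ContinuousOn.div (Real.continuous_arcsin.continuousOn)
        (Real.continuous_sqrt.comp (by fun_prop) |>.continuousOn)
      intro t htm
      have h : 0 < 1 - t^2 := by nlinarith [htm.1, htm.2, ha1]
      exact ne_of_gt (Real.sqrt_pos.mpr h)
  rw [funext hterm, hint] at key
  exact key

/-- With τ = (√3 − 1)/2, the series ∑_{m=1}^∞ 2^m·(2 − √3)^m / (m²·C(2m, m)) converges and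
equals 2·(arcsin τ)². -/
theorem lehmer_corrected_p457 :
    HasSum (fun m : ℕ =>
      2 ^ (m + 1) * (2 - Real.sqrt 3) ^ (m + 1) /
        ((m + 1 : ℝ) ^ 2 * (Nat.choose (2 * (m + 1)) (m + 1) : ℝ)))
      (2 * Real.arcsin ((Real.sqrt 3 - 1) / 2) ^ 2) := by
  have s3 : Real.sqrt 3 ^ 2 = 3 := Real.sq_sqrt (by norm_num)
  have s3n : (0:ℝ) ≤ Real.sqrt 3 := Real.sqrt_nonneg 3
  have s31 : (1:ℝ) < Real.sqrt 3 := by nlinarith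
  have s32 : Real.sqrt 3 < 2 := by nlinarith
  exact lehmer_general _ (by linarith) (by linarith) (by nlinarith) (by nlinarith)
end
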